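/- arXiv:0910.4504 — 9 statements merged into one kernel-verified Lean document; each statement's English description precedes it below -/
import Mathlib

section
/- Let |ψ₁⟩, …, |ψ_k⟩ ∈ ℂ⁴ be unit vectors and p₁, …, p_k ≥ 0 weights, and set ρ = Σᵢ pᵢ |ψᵢ⟩⟨ψᵢ| and ρ̃ = J ρ̄ J. Define the k×k matrices ρ̃′ with entries ρ̃′_{mj} = √(p_m p_j) ⟨ψ_m| ρ̃ |ψ_j⟩ and r′ with entries r′_{ij} = √(p_i p_j) ⟨ψ_i| J |ψ_j*⟩ (where |ψ_j*⟩ is the entrywise complex conjugate of |ψ_j⟩). Then ρ̃′ = r′ (r′)† , where (r′)† is the conjugate transpose of r′. -/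
open Matrix

noncomputable section

/-- `J = σ_y ⊗ σ_y` as a complex 4×4 matrix (standard product basis). -/
def Jc : Matrix (Fin 4) (Fin 4) ℂ :=
  !![0, 0, 0, -1; 0, 0, 1, 0; 0, 1, 0, 0; -1, 0, 0, 0]

lemma Jc_mulVec (x : Fin 4 → ℂ) : Jc *ᵥ x = ![-(x 3), x 2, x 1, -(x 0)] := by
  funext a
  fin_cases a <;>
    simp [Jc, Matrix.mulVec, dotProduct, Fin.sum_univ_four]

lemma M_mulVec (w y : Fin 4 → ℂ) :
    (vecMulVec w (star w)).map (starRingEnd ℂ) *ᵥ y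
      = fun a => (starRingEnd ℂ) (w a) * (w ⬝ᵥ y) := by
  funext a
  simp [Matrix.mulVec, dotProduct, vecMulVec_apply, Fin.sum_univ_four, Pi.star_apply]
  ring

lemma aux1 (u v w : Fin 4 → ℂ) :
    star u ⬝ᵥ ((Jc * (vecMulVec w (star w)).map (starRingEnd ℂ) * Jc) *ᵥ v)
      = (star u ⬝ᵥ (Jc *ᵥ star w)) * (starRingEnd ℂ) (star v ⬝ᵥ (Jc *ᵥ star w)) := by
  rw [Matrix.mul_assoc, ← Matrix.mulVec_mulVec, ← Matrix.mulVec_mulVec, Jc_mulVec v, M_mulVec,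
    Jc_mulVec, Jc_mulVec]
  simp [dotProduct, Fin.sum_univ_four, Pi.star_apply, map_add, map_neg, _root_.map_mul,
    Complex.conj_conj]
  ring

lemma dot_sum_mulVec {k : ℕ} (u v : Fin 4 → ℂ) (A : Fin k → Matrix (Fin 4) (Fin 4) ℂ) :
    star u ⬝ᵥ ((∑ i, A i) *ᵥ v) = ∑ i, star u ⬝ᵥ (A i *ᵥ v) := by
  simp only [Matrix.mulVec, dotProduct, Matrix.sum_apply, Finset.sum_mul,
    Finset.mul_sum]
  rw [Finset.sum_congr rfl fun a _ => Finset.sum_comm, Finset.sum_comm]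

/-- For `ρ = Σᵢ pᵢ |ψᵢ⟩⟨ψᵢ|` and `ρ̃ = J ρ̄ J`, the matrix `ρ̃′` with entries
`ρ̃′_{mj} = √(p_m p_j) ⟨ψ_m| ρ̃ |ψ_j⟩` equals `r′ (r′)†`, where
`r′_{ij} = √(p_i p_j) ⟨ψ_i| J |ψ_j*⟩`. -/
theorem spinFlipped_gram_factorization
    (k : ℕ) (p : Fin k → ℝ) (hp : ∀ i, 0 ≤ p i)
    (ψ : Fin k → Fin 4 → ℂ) (hψ : ∀ i, star (ψ i) ⬝ᵥ ψ i = 1)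
    (ρ : Matrix (Fin 4) (Fin 4) ℂ)
    (hρ : ρ = ∑ i, (p i : ℂ) • vecMulVec (ψ i) (star (ψ i)))
    (ρt : Matrix (Fin 4) (Fin 4) ℂ)
    (hρt : ρt = Jc * ρ.map (starRingEnd ℂ) * Jc)
    (ρt' : Matrix (Fin k) (Fin k) ℂ)
    (hρt' : ∀ m j, ρt' m j = (Real.sqrt (p m * p j) : ℂ) * (star (ψ m) ⬝ᵥ (ρt *ᵥ ψ j)))
    (r' : Matrix (Fin k) (Fin k) ℂ)
    (hr' : ∀ i j, r' i j = (Real.sqrt (p i * p j) : ℂ) * (star (ψ i) ⬝ᵥ (Jc *ᵥ star (ψ j)))) :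
    ρt' = r' * r'ᴴ := by
  subst hρ hρt
  have hmap : (∑ i, (p i : ℂ) • vecMulVec (ψ i) (star (ψ i))).map (starRingEnd ℂ)
      = ∑ i, (p i : ℂ) • (vecMulVec (ψ i) (star (ψ i))).map (starRingEnd ℂ) := by
    ext a b
    simp [Matrix.map_apply, Matrix.sum_apply, Matrix.smul_apply, map_sum, _root_.map_mul,
      Complex.conj_ofReal, smul_eq_mul]
  have hJJ : Jc * (∑ i, (p i : ℂ) • vecMulVec (ψ i) (star (ψ i))).map (starRingEnd ℂ) * Jc
      = ∑ i, (p i : ℂ) • (Jc * (vecMulVec (ψ i) (star (ψ i))).map (starRingEnd ℂ) * Jc) := by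
    rw [hmap, Matrix.mul_sum, Matrix.sum_mul]
    congr 1
    funext i
    rw [Matrix.mul_smul, Matrix.smul_mul]
  ext m j
  rw [hρt' m j, Matrix.mul_apply, hJJ, dot_sum_mulVec, Finset.mul_sum]
  refine Finset.sum_congr rfl fun i _ => ?_
  rw [conjTranspose_apply, hr', hr', smul_mulVec, dotProduct_smul, smul_eq_mul, aux1]
  have hsq : (Real.sqrt (p m * p j) : ℂ) * (p i : ℂ)
      = (Real.sqrt (p m * p i) : ℂ) * (Real.sqrt (p j * p i) : ℂ) := by
    have h : Real.sqrt (p m * p j) * p i = Real.sqrt (p m * p i) * Real.sqrt (p j * p i) := by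
      calc Real.sqrt (p m * p j) * p i
          = (Real.sqrt (p m) * Real.sqrt (p j)) * (Real.sqrt (p i) * Real.sqrt (p i)) := by
            rw [Real.sqrt_mul (hp m), Real.mul_self_sqrt (hp i)]
        _ = (Real.sqrt (p m) * Real.sqrt (p i)) * (Real.sqrt (p j) * Real.sqrt (p i)) := by ring
        _ = Real.sqrt (p m * p i) * Real.sqrt (p j * p i) := by
            rw [Real.sqrt_mul (hp m), Real.sqrt_mul (hp j)]
    calc (Real.sqrt (p m * p j) : ℂ) * (p i : ℂ)
        = ((Real.sqrt (p m * p j) * p i : ℝ) : ℂ) := by push_cast; ring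
      _ = ((Real.sqrt (p m * p i) * Real.sqrt (p j * p i) : ℝ) : ℂ) := by rw [h]
      _ = _ := by push_cast; ring
  rw [Complex.star_def, _root_.map_mul, Complex.conj_ofReal]
  linear_combination (star (ψ m) ⬝ᵥ Jc *ᵥ star (ψ i) *
    (starRingEnd ℂ) (star (ψ j) ⬝ᵥ Jc *ᵥ star (ψ i))) * hsq

end
end

section
/- Let |ψ₁⟩, …, |ψ₄⟩ ∈ ℂ⁴ be linearly independent unit vectors and p₁, …, p₄ > 0, and set ρ = Σᵢ pᵢ |ψᵢ⟩⟨ψᵢ| and ρ̃ = J ρ̄ J. Define the 4×4 matrix r′ with entries r′_{ij} = √(p_i p_j) ⟨ψ_i| J |ψ_j*⟩ (where |ψ_j*⟩ is the entrywise complex conjugate of |ψ_j⟩). Then the characteristic polynomial of ρρ̃ equals the characteristic polynomial of r′ (r′)†. -/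
open Matrix

noncomputable section

open Polynomial in
theorem aux_charpoly_conj_units (P : (Matrix (Fin 4) (Fin 4) ℂ)ˣ) (M : Matrix (Fin 4) (Fin 4) ℂ) :
    (((P⁻¹ : (Matrix (Fin 4) (Fin 4) ℂ)ˣ) : Matrix (Fin 4) (Fin 4) ℂ) * M
      * (P : Matrix (Fin 4) (Fin 4) ℂ)).charpoly = M.charpoly := by
  let Q : (Matrix (Fin 4) (Fin 4) ℂ[X])ˣ :=
    Units.map (RingHom.toMonoidHom (RingHom.mapMatrix (C : ℂ →+* ℂ[X]))) P
  have hQ : (Q : Matrix (Fin 4) (Fin 4) ℂ[X]) = (P : Matrix (Fin 4) (Fin 4) ℂ).map C := rfl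
  have hQi : ((Q⁻¹ : (Matrix (Fin 4) (Fin 4) ℂ[X])ˣ) : Matrix (Fin 4) (Fin 4) ℂ[X])
      = ((P⁻¹ : (Matrix (Fin 4) (Fin 4) ℂ)ˣ) : Matrix (Fin 4) (Fin 4) ℂ).map C := rfl
  have hsc : ∀ B : Matrix (Fin 4) (Fin 4) ℂ[X],
      Matrix.scalar (Fin 4) (X : ℂ[X]) * B = B * Matrix.scalar (Fin 4) (X : ℂ[X]) :=
    fun B => (scalar_commute (X : ℂ[X]) (fun r' => Commute.all _ _) B).eq
  have hc : charmatrix (((P⁻¹ : (Matrix (Fin 4) (Fin 4) ℂ)ˣ) : Matrix (Fin 4) (Fin 4) ℂ) * M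
      * (P : Matrix (Fin 4) (Fin 4) ℂ))
      = ((Q⁻¹ : (Matrix (Fin 4) (Fin 4) ℂ[X])ˣ) : Matrix (Fin 4) (Fin 4) ℂ[X]) * charmatrix M
        * (Q : Matrix (Fin 4) (Fin 4) ℂ[X]) := by
    unfold charmatrix
    simp only [RingHom.mapMatrix_apply, hQ, hQi, mul_sub, sub_mul, Matrix.map_mul]
    congr 1
    rw [← hQ, ← hQi, Matrix.mul_assoc, hsc, ← Matrix.mul_assoc, Q.inv_mul, Matrix.one_mul]
  rw [Matrix.charpoly, hc, Matrix.det_mul, Matrix.det_mul, mul_comm, ← mul_assoc,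
    ← Matrix.det_mul, Q.mul_inv, Matrix.det_one, one_mul, Matrix.charpoly]

theorem aux_charpoly_mul_comm_of_isUnit {A : Matrix (Fin 4) (Fin 4) ℂ} (hA : IsUnit A)
    (B : Matrix (Fin 4) (Fin 4) ℂ) : (A * B).charpoly = (B * A).charpoly := by
  obtain ⟨P, rfl⟩ := hA
  have := aux_charpoly_conj_units P ((P : Matrix (Fin 4) (Fin 4) ℂ) * B)
  rw [← this, ← Matrix.mul_assoc, P.inv_mul, Matrix.one_mul]

/-- For `ρ = Σᵢ pᵢ |ψᵢ⟩⟨ψᵢ|` built from four linearly independent unit vectors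
with positive weights, the characteristic polynomial of `ρ ρ̃` (with
`ρ̃ = J ρ̄ J`) equals that of `r′ (r′)†`, where
`r′_{ij} = √(p_i p_j) ⟨ψ_i| J |ψ_j*⟩`. -/
theorem charpoly_rho_rhoTilde_eq
    (ψ : Fin 4 → Fin 4 → ℂ) (hind : LinearIndependent ℂ ψ)
    (hψ : ∀ i, star (ψ i) ⬝ᵥ ψ i = 1)
    (p : Fin 4 → ℝ) (hp : ∀ i, 0 < p i)
    (ρ : Matrix (Fin 4) (Fin 4) ℂ)
    (hρ : ρ = ∑ i, (p i : ℂ) • vecMulVec (ψ i) (star (ψ i)))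
    (r' : Matrix (Fin 4) (Fin 4) ℂ)
    (hr' : ∀ i j, r' i j = (Real.sqrt (p i * p j) : ℂ) * (star (ψ i) ⬝ᵥ (Jc *ᵥ star (ψ j)))) :
    (ρ * (Jc * ρ.map (starRingEnd ℂ) * Jc)).charpoly = (r' * r'ᴴ).charpoly := by
  set A : Matrix (Fin 4) (Fin 4) ℂ :=
    Matrix.of fun i j => ((Real.sqrt (p j) : ℝ) : ℂ) * ψ j i with hA_def
  -- A is invertible
  have hA : IsUnit A := by
    rw [← Matrix.linearIndependent_cols_iff_isUnit]
    have := hind.units_smul (fun j => Units.mk0 ((Real.sqrt (p j) : ℝ) : ℂ)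
      (by exact_mod_cast Real.sqrt_ne_zero'.mpr (hp j)))
    convert this using 1
    · ext i j
      simp [hA_def, Matrix.col, Units.smul_def]
    · rfl
  -- ρ = A Aᴴ
  have hρA : ρ = A * Aᴴ := by
    rw [hρ]
    ext i k
    simp only [Matrix.sum_apply, Matrix.smul_apply, vecMulVec_apply, Pi.star_apply,
      smul_eq_mul, Matrix.mul_apply, Matrix.conjTranspose_apply, Matrix.of_apply, hA_def,
      star_mul', Complex.star_def, Complex.conj_ofReal]
    refine Finset.sum_congr rfl fun j _ => ?_
    have : ((Real.sqrt (p j) : ℝ) : ℂ) * ((Real.sqrt (p j) : ℝ) : ℂ) = (p j : ℂ) := by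
      rw [← Complex.ofReal_mul, Real.mul_self_sqrt (hp j).le]
    rw [← this]; ring
  -- conjugates of A
  have hAconjH : Aᴴ.map (starRingEnd ℂ) = Aᵀ := by
    ext i j
    simp [Matrix.map_apply, Matrix.conjTranspose_apply, Matrix.transpose_apply]
  have hAbarH : (A.map (starRingEnd ℂ))ᴴ = Aᵀ := by
    ext i j
    simp [Matrix.map_apply, Matrix.conjTranspose_apply, Matrix.transpose_apply]
  have hJH : Jcᴴ = Jc := by
    ext i j
    fin_cases i <;> fin_cases j <;>
      simp [Jc, Matrix.conjTranspose_apply, Matrix.vecHead, Matrix.vecTail]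
  have hmap : ρ.map (starRingEnd ℂ) = A.map (starRingEnd ℂ) * Aᵀ := by
    rw [hρA, Matrix.map_mul, hAconjH]
  -- r' = Aᴴ (J Ā)
  have hr'A : r' = Aᴴ * (Jc * A.map (starRingEnd ℂ)) := by
    ext i j
    rw [hr' i j, Real.sqrt_mul (hp i).le]
    simp only [Matrix.mul_apply, Matrix.conjTranspose_apply, Matrix.of_apply, Matrix.map_apply,
      dotProduct, Matrix.mulVec, Pi.star_apply, Complex.star_def, _root_.map_mul,
      Complex.conj_ofReal, Complex.ofReal_mul, Finset.mul_sum, hA_def]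
    refine Finset.sum_congr rfl fun k _ => ?_
    refine Finset.sum_congr rfl fun l _ => ?_
    ring
  calc (ρ * (Jc * ρ.map (starRingEnd ℂ) * Jc)).charpoly
      = (A * (Aᴴ * (Jc * (A.map (starRingEnd ℂ) * (Aᵀ * Jc))))).charpoly := by
        rw [hmap, hρA]; congr 1; simp only [Matrix.mul_assoc]
    _ = ((Aᴴ * (Jc * (A.map (starRingEnd ℂ) * (Aᵀ * Jc)))) * A).charpoly :=
        aux_charpoly_mul_comm_of_isUnit hA _
    _ = (r' * r'ᴴ).charpoly := by
        rw [hr'A]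
        simp only [Matrix.conjTranspose_mul, Matrix.conjTranspose_conjTranspose, hAbarH, hJH]
        congr 1
        simp only [Matrix.mul_assoc]

end
end

section
/- For every real unit vector ψ = (x₁, x₂, x₃, x₄) ∈ ℝ⁴, the concurrence of the pure-state density matrix ψψᵀ equals |ψᵀ J ψ| = 2|x₂x₃ − x₁x₄|. -/
open Matrix Polynomial

noncomputable section

/-- `J = σ_y ⊗ σ_y` as a real 4×4 matrix (standard product basis). -/
def Jr : Matrix (Fin 4) (Fin 4) ℝ :=
  !![0, 0, 0, -1; 0, 0, 1, 0; 0, 1, 0, 0; -1, 0, 0, 0]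

/-- The spin-flipped matrix `ρ̃ = J ρ̄ J`. -/
def spinFlip (ρ : Matrix (Fin 4) (Fin 4) ℂ) : Matrix (Fin 4) (Fin 4) ℂ :=
  Jc * ρ.map (starRingEnd ℂ) * Jc

/-- The concurrence of a two-qubit density matrix `ρ`:
`max (0, √μ₁ − √μ₂ − √μ₃ − √μ₄)` where `μ₁ ≥ μ₂ ≥ μ₃ ≥ μ₄` are the (real,
nonnegative) eigenvalues of `ρ ρ̃` listed with multiplicity. -/
def concurrence (ρ : Matrix (Fin 4) (Fin 4) ℂ) : ℝ :=
  let l : List ℝ :=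
    (((ρ * spinFlip ρ).charpoly.roots.map Complex.re).sort (· ≤ ·))
  max 0 (Real.sqrt (l.getD 3 0) - Real.sqrt (l.getD 2 0) -
    Real.sqrt (l.getD 1 0) - Real.sqrt (l.getD 0 0))

/-- The (complex) density matrix of the pure state given by a real 4-vector `ψ`,
namely `ψ ψᵀ`. -/
def pureState (ψ : Fin 4 → ℝ) : Matrix (Fin 4) (Fin 4) ℂ :=
  (Matrix.vecMulVec ψ ψ).map Complex.ofReal

end

lemma charpoly_rank_one (u w : Fin 4 → ℂ) :
    (Matrix.of fun i j => u i * w j).charpoly = X^4 - C (u ⬝ᵥ w) * X^3 := by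
  rw [Matrix.charpoly]
  rw [Matrix.det_succ_row_zero]
  simp only [Fin.sum_univ_succ, Fin.sum_univ_zero, Matrix.det_succ_row_zero,
    Matrix.submatrix_apply, Matrix.det_fin_one, charmatrix_apply, Matrix.of_apply,
    Matrix.map_apply, Matrix.one_apply, dotProduct, Fin.sum_univ_four]
  norm_num [Fin.succAbove, Fin.lt_def, Fin.ext_iff, Matrix.diagonal_apply,
    Fin.castSucc, Fin.castAdd, Fin.castLE, Fin.succ]
  try simp only [_root_.map_mul, _root_.map_add]
  ring

set_option maxHeartbeats 1000000 in
lemma purespin_eq (a b c d : ℝ) :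
    pureState ![a,b,c,d] * spinFlip (pureState ![a,b,c,d]) =
      Matrix.of (fun i j => (((2*(b*c-a*d):ℝ):ℂ) * (![a,b,c,d] i : ℝ)) *
        (![-(d:ℂ), c, b, -a] j)) := by
  have key : ∀ i j, (pureState ![a,b,c,d] * spinFlip (pureState ![a,b,c,d])) i j
      = ∑ p, ∑ q, ∑ r, (![a,b,c,d] i * ![a,b,c,d] p : ℝ) * Jc p q *
        ((![a,b,c,d] q * ![a,b,c,d] r : ℝ) : ℂ) * Jc r j := by
    intro i j
    simp only [pureState, spinFlip, Matrix.mul_apply, Matrix.map_apply,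
      Matrix.vecMulVec_apply, Complex.conj_ofReal, Finset.sum_mul,
      Finset.mul_sum, Matrix.of_apply]
    refine Finset.sum_congr rfl fun p _ => ?_
    rw [Finset.sum_comm]
    refine Finset.sum_congr rfl fun q _ => Finset.sum_congr rfl fun r _ => ?_
    ring
  ext i j
  rw [key]
  fin_cases i <;> fin_cases j <;>
    · norm_num [Jc, Fin.sum_univ_four, Matrix.vecHead, Matrix.vecTail,
        Function.comp]
      try push_cast
      try ring

lemma roots_aux (e : ℂ) :
    (X^4 - C e * X^3 : ℂ[X]).roots = Multiset.replicate 3 0 + {e} := by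
  have h : (X^4 - C e * X^3 : ℂ[X]) = X^3 * (X - C e) := by ring
  rw [h, Polynomial.roots_mul
    (mul_ne_zero (pow_ne_zero _ Polynomial.X_ne_zero) (Polynomial.X_sub_C_ne_zero e)),
    Polynomial.roots_pow, Polynomial.roots_X, Polynomial.roots_X_sub_C]
  simp [Multiset.nsmul_singleton]

lemma sort_aux (t : ℝ) (ht : 0 ≤ t) :
    (Multiset.replicate 3 (0:ℝ) + {t}).sort (· ≤ ·) = [0, 0, 0, t] := by
  have hcoe : (Multiset.replicate 3 (0:ℝ) + {t}) = ([0,0,0,t] : List ℝ) := by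
    rfl
  have hp : List.Perm (Multiset.sort (α := ℝ) (Multiset.replicate 3 0 + {t}) (· ≤ ·)) [0,0,0,t] :=
    Multiset.coe_eq_coe.mp (by rw [Multiset.sort_eq, hcoe])
  exact List.Perm.eq_of_pairwise' (Multiset.pairwise_sort _ _)
    (by simp [List.pairwise_cons, ht]) hp

/-- For a real two-qubit pure state `ψ`, the concurrence of `ψψᵀ` equals
`|ψᵀ J ψ| = 2|x₂x₃ − x₁x₄|`. -/
theorem concurrence_pureState (ψ : Fin 4 → ℝ) (hψ : ∑ i, ψ i ^ 2 = 1) :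
    concurrence (pureState ψ) = |ψ ⬝ᵥ (Jr *ᵥ ψ)| ∧
      |ψ ⬝ᵥ (Jr *ᵥ ψ)| = 2 * |ψ 1 * ψ 2 - ψ 0 * ψ 3| := by
  clear hψ
  obtain ⟨a, b, c, d, rfl⟩ : ∃ a b c d, ψ = ![a, b, c, d] :=
    ⟨ψ 0, ψ 1, ψ 2, ψ 3, by funext i; fin_cases i <;> rfl⟩
  set k : ℝ := 2 * (b * c - a * d) with hk
  have hdot : ![a,b,c,d] ⬝ᵥ (Jr *ᵥ ![a,b,c,d]) = k := by
    simp [Jr, Matrix.mulVec, dotProduct, Fin.sum_univ_four,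
      Matrix.vecHead, Matrix.vecTail, hk]
    ring
  have hcp : (pureState ![a,b,c,d] * spinFlip (pureState ![a,b,c,d])).charpoly
      = X^4 - C ((k^2 : ℝ) : ℂ) * X^3 := by
    rw [purespin_eq]
    rw [charpoly_rank_one]
    congr 1
    congr 1
    congr 1
    simp [dotProduct, Fin.sum_univ_four, hk]
    push_cast
    ring
  have hroots : ((pureState ![a,b,c,d] * spinFlip (pureState ![a,b,c,d])).charpoly.roots.map
      Complex.re) = Multiset.replicate 3 (0:ℝ) + {k^2} := by
    rw [hcp, roots_aux]
    simp [Multiset.map_replicate, ← Complex.ofReal_pow]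
  have hconc : concurrence (pureState ![a,b,c,d]) = |k| := by
    rw [concurrence]
    simp only [hroots, sort_aux (k^2) (sq_nonneg k)]
    simp [Real.sqrt_sq_eq_abs, abs_nonneg]
  refine ⟨?_, ?_⟩
  · rw [hconc, hdot]
  · rw [hdot, hk]
    rw [abs_mul]
    simp [abs_of_nonneg]
end

section
/- Let ψ₁, ψ₂ ∈ ℝ⁴ be linearly independent real unit vectors, let p ∈ (0,1), and set ρ = p ψ₁ψ₁ᵀ + (1−p) ψ₂ψ₂ᵀ, r_{ij} = ψᵢᵀ J ψ_j, ξ = p r₁₁ + (1−p) r₂₂ and χ = r₁₁r₂₂ − r₁₂². If χ > 0, then ξ² − 4p(1−p)χ ≥ 0, the concurrence satisfies C(ρ) = √(ξ² − 4p(1−p)χ), and C(ρ) < |ξ| ≤ p C(ψ₁ψ₁ᵀ) + (1−p) C(ψ₂ψ₂ᵀ). -/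
set_option maxHeartbeats 1200000


open Matrix Polynomial

noncomputable section AuxLemmas

private lemma eval_charpoly'' {k : ℕ} (M : Matrix (Fin k) (Fin k) ℂ) (x : ℂ) :
    M.charpoly.eval x = (x • (1 : Matrix (Fin k) (Fin k) ℂ) - M).det := by
  have h : (charmatrix M).map (eval x) = x • 1 - M := by
    ext i j
    by_cases h : i = j <;>
      simp [h, charmatrix_apply, Matrix.diagonal_apply, Matrix.one_apply,
        Matrix.sub_apply, Matrix.smul_apply, Matrix.map_apply]
  rw [Matrix.charpoly, ← Polynomial.coe_evalRingHom, RingHom.map_det,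
    RingHom.mapMatrix_apply, Polynomial.coe_evalRingHom, h]

private lemma charpoly_mul_comm_pow {m n : ℕ}
    (A : Matrix (Fin m) (Fin n) ℂ) (B : Matrix (Fin n) (Fin m) ℂ) :
    (A * B).charpoly * X ^ n = (B * A).charpoly * X ^ m := by
  apply Polynomial.eq_of_infinite_eval_eq
  apply Set.Infinite.mono (s := {x : ℂ | x ≠ 0})
  swap
  · simpa [Set.compl_def] using (Set.finite_singleton (0:ℂ)).infinite_compl
  intro x hx
  simp only [Set.mem_setOf_eq] at hx ⊢
  rw [eval_mul, eval_mul, eval_pow, eval_pow, eval_X, eval_charpoly'', eval_charpoly'']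
  have e1 : x • (1 : Matrix (Fin m) (Fin m) ℂ) - A * B = x • (1 - (x⁻¹ • A) * B) := by
    rw [smul_sub, Matrix.smul_mul, smul_smul, mul_inv_cancel₀ hx, one_smul]
  have e2 : x • (1 : Matrix (Fin n) (Fin n) ℂ) - B * A = x • (1 - B * (x⁻¹ • A)) := by
    rw [smul_sub, Matrix.mul_smul, smul_smul, mul_inv_cancel₀ hx, one_smul]
  rw [e1, e2, Matrix.det_smul, Matrix.det_smul, Matrix.det_one_sub_mul_comm,
    Fintype.card_fin, Fintype.card_fin]
  ring

private lemma sort_coe_of_sorted {l : List ℝ} (h : l.Pairwise (· ≤ ·)) :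
    (↑l : Multiset ℝ).sort (· ≤ ·) = l :=
  List.Perm.eq_of_pairwise' (Multiset.pairwise_sort _ _) h
    (Multiset.coe_eq_coe.mp (Multiset.sort_eq _ _))

private lemma charpoly_fin_one' (M : Matrix (Fin 1) (Fin 1) ℂ) : M.charpoly = X - C (M 0 0) := by
  rw [Matrix.charpoly, Matrix.det_fin_one, charmatrix_apply_eq]

private lemma charpoly_fin_two' (M : Matrix (Fin 2) (Fin 2) ℂ) :
    M.charpoly = X ^ 2 - C (M 0 0 + M 1 1) * X + C (M 0 0 * M 1 1 - M 0 1 * M 1 0) := by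
  rw [Matrix.charpoly, Matrix.det_fin_two]
  simp only [charmatrix_apply_eq, charmatrix_apply_ne _ _ _ (by decide : (0 : Fin 2) ≠ 1),
    charmatrix_apply_ne _ _ _ (by decide : (1 : Fin 2) ≠ 0), C_add, C_mul, C_sub]
  ring

private lemma concurrence_of_charpoly2 (ρ : Matrix (Fin 4) (Fin 4) ℂ) (a b : ℝ)
    (hb : 0 ≤ b) (hab : b ≤ a)
    (h : (ρ * spinFlip ρ).charpoly = (X - C (a : ℂ)) * (X - C (b : ℂ)) * X ^ 2) :
    concurrence ρ = Real.sqrt a - Real.sqrt b := by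
  have hroots : (ρ * spinFlip ρ).charpoly.roots.map Complex.re
      = (↑[0, 0, b, a] : Multiset ℝ) := by
    rw [h, roots_mul (by
      refine mul_ne_zero (mul_ne_zero (X_sub_C_ne_zero _) (X_sub_C_ne_zero _)) ?_
      exact pow_ne_zero _ X_ne_zero),
      roots_mul (mul_ne_zero (X_sub_C_ne_zero _) (X_sub_C_ne_zero _)),
      roots_X_sub_C, roots_X_sub_C, roots_pow, roots_X]
    have h2 : (({(a:ℂ)} + {(b:ℂ)} + 2 • {(0:ℂ)} : Multiset ℂ)).map Complex.re
        = (↑[a, b, 0, 0] : Multiset ℝ) := by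
      rw [show (2 • {(0:ℂ)} : Multiset ℂ) = {0, 0} by rfl]
      simp [Multiset.insert_eq_cons]
      rw [Multiset.cons_swap 0 a, Multiset.cons_swap 0 b]
      rfl
    rw [h2, Multiset.coe_eq_coe]
    simpa using (List.reverse_perm [(0:ℝ), 0, b, a])
  have hsorted : (((ρ * spinFlip ρ).charpoly.roots.map Complex.re).sort (· ≤ ·))
      = [0, 0, b, a] := by
    rw [hroots]
    apply sort_coe_of_sorted
    have h0a : (0:ℝ) ≤ a := le_trans hb hab
    simp [List.pairwise_cons, hb, hab, h0a]
  simp only [concurrence, hsorted]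
  simp only [List.getD_eq_getElem?_getD, List.getElem?_cons_succ, List.getElem?_cons_zero, Option.getD_some, Real.sqrt_zero]
  rw [max_eq_right]
  · norm_num
  · norm_num
    exact Real.sqrt_le_sqrt hab

private lemma concurrence_of_charpoly1 (ρ : Matrix (Fin 4) (Fin 4) ℂ) (a : ℝ)
    (ha : 0 ≤ a)
    (h : (ρ * spinFlip ρ).charpoly = (X - C (a : ℂ)) * X ^ 3) :
    concurrence ρ = Real.sqrt a := by
  have hroots : (ρ * spinFlip ρ).charpoly.roots.map Complex.re
      = (↑[0, 0, 0, a] : Multiset ℝ) := by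
    rw [h, roots_mul (mul_ne_zero (X_sub_C_ne_zero _) (pow_ne_zero _ X_ne_zero)),
      roots_X_sub_C, roots_pow, roots_X]
    have h2 : (({(a:ℂ)} + 3 • {(0:ℂ)} : Multiset ℂ)).map Complex.re
        = (↑[a, 0, 0, 0] : Multiset ℝ) := by
      rw [show (3 • {(0:ℂ)} : Multiset ℂ) = {0, 0, 0} by rfl]
      simp [Multiset.insert_eq_cons]
      rw [Multiset.cons_swap 0 a, Multiset.cons_swap 0 a]
      rfl
    rw [h2, Multiset.coe_eq_coe]
    simpa using (List.reverse_perm [(0:ℝ), 0, 0, a])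
  have hsorted : (((ρ * spinFlip ρ).charpoly.roots.map Complex.re).sort (· ≤ ·))
      = [0, 0, 0, a] := by
    rw [hroots]
    apply sort_coe_of_sorted
    simp [List.pairwise_cons, ha]
  simp only [concurrence, hsorted]
  simp only [List.getD_eq_getElem?_getD, List.getElem?_cons_succ, List.getElem?_cons_zero, Option.getD_some, Real.sqrt_zero]
  rw [max_eq_right] <;> norm_num

private lemma pureState_eq (ψ : Fin 4 → ℝ) :
    pureState ψ = Matrix.vecMulVec (fun i => (ψ i : ℂ)) (fun i => (ψ i : ℂ)) := by
  ext i j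
  simp [pureState, Matrix.vecMulVec_apply]

private lemma spinFlip_pure (ψ : Fin 4 → ℝ) :
    spinFlip (pureState ψ) = pureState (Jr *ᵥ ψ) := by
  have hconj : (pureState ψ).map (starRingEnd ℂ) = pureState ψ := by
    ext i j
    simp [pureState, Complex.conj_ofReal]
  have hJv : Jc *ᵥ (fun i => ((ψ i : ℝ) : ℂ)) = fun i => (((Jr *ᵥ ψ) i : ℝ) : ℂ) := by
    funext i
    fin_cases i <;>
      simp [Jc, Jr, Matrix.mulVec, dotProduct, Fin.sum_univ_four, Matrix.vecHead,
        Matrix.vecTail]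
  have hvJ : (fun i => ((ψ i : ℝ) : ℂ)) ᵥ* Jc = fun i => (((Jr *ᵥ ψ) i : ℝ) : ℂ) := by
    funext i
    fin_cases i <;>
      simp [Jc, Jr, Matrix.vecMul, Matrix.mulVec, dotProduct, Fin.sum_univ_four,
        Matrix.vecHead, Matrix.vecTail]
  rw [spinFlip, hconj, pureState_eq, Matrix.vecMulVec_eq (Fin 1), pureState_eq,
    Matrix.vecMulVec_eq (Fin 1), ← Matrix.mul_assoc Jc, Matrix.mul_assoc (Jc * _),
    ← Matrix.replicateCol_mulVec, ← Matrix.replicateRow_vecMul, hJv, hvJ]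

private lemma spinFlip_add (M N : Matrix (Fin 4) (Fin 4) ℂ) :
    spinFlip (M + N) = spinFlip M + spinFlip N := by
  have : (M + N).map (starRingEnd ℂ) = M.map (starRingEnd ℂ) + N.map (starRingEnd ℂ) := by
    ext i j
    simp [Matrix.map_apply]
  simp [spinFlip, this, Matrix.mul_add, Matrix.add_mul]

private lemma spinFlip_smul (c : ℝ) (M : Matrix (Fin 4) (Fin 4) ℂ) :
    spinFlip (c • M) = c • spinFlip M := by
  have : (c • M).map (starRingEnd ℂ) = c • M.map (starRingEnd ℂ) := by
    ext i j
    simp [Matrix.map_apply, Complex.real_smul]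
  simp [spinFlip, this, Matrix.mul_smul, Matrix.smul_mul]

private lemma concurrence_pure (ψ : Fin 4 → ℝ) :
    concurrence (pureState ψ) = |ψ ⬝ᵥ (Jr *ᵥ ψ)| := by
  set A : Matrix (Fin 4) (Fin 1) ℂ :=
    Matrix.of fun i _ => (((ψ ⬝ᵥ (Jr *ᵥ ψ)) * ψ i : ℝ) : ℂ) with hA
  set B : Matrix (Fin 1) (Fin 4) ℂ :=
    Matrix.of fun _ j => (((Jr *ᵥ ψ) j : ℝ) : ℂ) with hB
  have hAB : pureState ψ * spinFlip (pureState ψ) = A * B := by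
    rw [spinFlip_pure]
    ext i j
    simp only [hA, hB, pureState, Matrix.mul_apply, Matrix.map_apply,
      Matrix.vecMulVec_apply, Matrix.of_apply, Fin.sum_univ_four, Fin.sum_univ_one,
      dotProduct]
    push_cast
    ring
  have hentry : (B * A) 0 0 = (((ψ ⬝ᵥ (Jr *ᵥ ψ))^2 : ℝ) : ℂ) := by
    simp only [hA, hB, Matrix.mul_apply, Matrix.of_apply, Fin.sum_univ_four, dotProduct]
    push_cast
    ring
  have key := charpoly_mul_comm_pow A B
  rw [charpoly_fin_one' (B * A), hentry] at key
  have hcp : (pureState ψ * spinFlip (pureState ψ)).charpoly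
      = (X - C (((ψ ⬝ᵥ (Jr *ᵥ ψ))^2 : ℝ) : ℂ)) * X ^ 3 := by
    rw [hAB]
    apply mul_right_cancel₀ (pow_ne_zero 1 (X_ne_zero : (X : ℂ[X]) ≠ 0))
    rw [key]
    ring
  rw [concurrence_of_charpoly1 _ _ (sq_nonneg _) hcp, Real.sqrt_sq_eq_abs]

end AuxLemmas

/-- Rank-2 mixtures of real pure states with `χ = r₁₁r₂₂ − r₁₂² > 0`:
the concurrence is `√(ξ² − 4p(1−p)χ)`, which is strictly below `|ξ|` and hence
below the weighted sum of pure-state concurrences. -/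
theorem rank_two_chi_pos
    (ψ₁ ψ₂ : Fin 4 → ℝ) (hind : LinearIndependent ℝ ![ψ₁, ψ₂])
    (h₁ : ∑ i, ψ₁ i ^ 2 = 1) (h₂ : ∑ i, ψ₂ i ^ 2 = 1)
    (p : ℝ) (hp : p ∈ Set.Ioo (0 : ℝ) 1)
    (ρ : Matrix (Fin 4) (Fin 4) ℂ)
    (hρ : ρ = p • pureState ψ₁ + (1 - p) • pureState ψ₂)
    (r₁₁ r₂₂ r₁₂ ξ χ : ℝ)
    (hr₁₁ : r₁₁ = ψ₁ ⬝ᵥ (Jr *ᵥ ψ₁)) (hr₂₂ : r₂₂ = ψ₂ ⬝ᵥ (Jr *ᵥ ψ₂))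
    (hr₁₂ : r₁₂ = ψ₁ ⬝ᵥ (Jr *ᵥ ψ₂))
    (hξ : ξ = p * r₁₁ + (1 - p) * r₂₂) (hχ : χ = r₁₁ * r₂₂ - r₁₂ ^ 2)
    (hχpos : 0 < χ) :
    0 ≤ ξ ^ 2 - 4 * p * (1 - p) * χ ∧
    concurrence ρ = Real.sqrt (ξ ^ 2 - 4 * p * (1 - p) * χ) ∧
    concurrence ρ < |ξ| ∧
    |ξ| ≤ p * concurrence (pureState ψ₁) + (1 - p) * concurrence (pureState ψ₂) := by
  obtain ⟨hp0, hp1⟩ := hp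
  have hq0 : 0 < 1 - p := by linarith
  have hpq : 0 < p * (1 - p) := mul_pos hp0 hq0
  -- discriminant
  have hΔ : 0 ≤ ξ ^ 2 - 4 * p * (1 - p) * χ := by
    have key : ξ ^ 2 - 4 * p * (1 - p) * χ
        = (p * r₁₁ - (1 - p) * r₂₂) ^ 2 + 4 * (p * (1 - p)) * r₁₂ ^ 2 := by
      rw [hξ, hχ]; ring
    rw [key]
    have := mul_nonneg hpq.le (sq_nonneg r₁₂)
    nlinarith [sq_nonneg (p * r₁₁ - (1 - p) * r₂₂)]
  set Δ : ℝ := ξ ^ 2 - 4 * p * (1 - p) * χ with hΔdef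
  have hΔlt : Δ < ξ ^ 2 := by
    have : 0 < 4 * p * (1 - p) * χ := by positivity
    simp only [hΔdef]; linarith
  have hsΔ : Real.sqrt Δ ^ 2 = Δ := Real.sq_sqrt hΔ
  have habs : |ξ| ^ 2 = ξ ^ 2 := sq_abs ξ
  have hsle : Real.sqrt Δ ≤ |ξ| := by
    have := Real.sqrt_le_sqrt hΔlt.le
    rwa [Real.sqrt_sq_eq_abs] at this
  have hm0 : 0 ≤ (|ξ| + Real.sqrt Δ) / 2 := by positivity
  have hn0 : 0 ≤ (|ξ| - Real.sqrt Δ) / 2 := by linarith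
  set a : ℝ := ((|ξ| + Real.sqrt Δ) / 2) ^ 2 with hadef
  set b : ℝ := ((|ξ| - Real.sqrt Δ) / 2) ^ 2 with hbdef
  have hb0 : 0 ≤ b := sq_nonneg _
  have hba : b ≤ a := by
    rw [hadef, hbdef]
    nlinarith [mul_nonneg (abs_nonneg ξ) (Real.sqrt_nonneg Δ)]
  have hsΔ' : Real.sqrt Δ ^ 2 = ξ ^ 2 - 4 * p * (1 - p) * χ := hsΔ.trans hΔdef
  have hab1 : a + b = ξ ^ 2 - 2 * (p * (1 - p)) * χ := by
    rw [hadef, hbdef]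
    linear_combination (1/2) * habs + (1/2) * hsΔ'
  have hdiff : |ξ| ^ 2 - Real.sqrt Δ ^ 2 = 4 * (p * (1 - p) * χ) := by
    rw [habs, hsΔ']; ring
  have hab2 : a * b = (p * (1 - p) * χ) ^ 2 := by
    rw [hadef, hbdef]
    linear_combination ((|ξ| ^ 2 - Real.sqrt Δ ^ 2 + 4 * (p * (1 - p) * χ)) / 16) * hdiff
  -- the factorization
  set A : Matrix (Fin 4) (Fin 2) ℂ :=
    Matrix.of fun i k =>
      ((![(p^2*r₁₁)*ψ₁ i + (p*(1-p)*(ψ₂ ⬝ᵥ (Jr *ᵥ ψ₁)))*ψ₂ i,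
          (p*(1-p)*r₁₂)*ψ₁ i + ((1-p)^2*r₂₂)*ψ₂ i] k : ℝ) : ℂ) with hA
  set B : Matrix (Fin 2) (Fin 4) ℂ :=
    Matrix.of fun k j => ((![(Jr *ᵥ ψ₁) j, (Jr *ᵥ ψ₂) j] k : ℝ) : ℂ) with hB
  have hAB : ρ * spinFlip ρ = A * B := by
    have hsf : spinFlip ρ
        = p • pureState (Jr *ᵥ ψ₁) + (1 - p) • pureState (Jr *ᵥ ψ₂) := by
      rw [hρ, spinFlip_add, spinFlip_smul, spinFlip_smul, spinFlip_pure, spinFlip_pure]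
    rw [hsf, hρ]
    ext i j
    simp only [hA, hB, Matrix.mul_apply, Matrix.add_apply, Matrix.smul_apply, pureState,
      Matrix.map_apply, Matrix.vecMulVec_apply, Matrix.of_apply, Fin.sum_univ_four,
      Fin.sum_univ_two, Matrix.cons_val_zero, Matrix.cons_val_one, Matrix.head_cons,
      Complex.real_smul, hr₁₁, hr₂₂, hr₁₂, dotProduct, Fin.isValue]
    push_cast
    ring
  have he1 : (B * A) 0 0 + (B * A) 1 1 = ((ξ ^ 2 - 2 * (p * (1 - p)) * χ : ℝ) : ℂ) := by
    simp [hA, hB, hξ, hχ, hr₁₁, hr₂₂, hr₁₂, Matrix.mul_apply, Fin.sum_univ_four,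
      Fin.sum_univ_two, dotProduct, Matrix.mulVec, Jr, Matrix.vecHead, Matrix.vecTail]
    push_cast
    ring
  have he2 : (B * A) 0 0 * (B * A) 1 1 - (B * A) 0 1 * (B * A) 1 0
      = (((p * (1 - p) * χ) ^ 2 : ℝ) : ℂ) := by
    simp [hA, hB, hχ, hr₁₁, hr₂₂, hr₁₂, Matrix.mul_apply, Fin.sum_univ_four,
      Fin.sum_univ_two, dotProduct, Matrix.mulVec, Jr, Matrix.vecHead, Matrix.vecTail]
    push_cast
    ring
  have hBA : (B * A).charpoly = (X - C (a : ℂ)) * (X - C (b : ℂ)) := by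
    rw [charpoly_fin_two', he1, he2, ← hab1, ← hab2]
    simp only [Complex.ofReal_add, Complex.ofReal_mul, _root_.map_add, _root_.map_mul]
    ring
  have key := charpoly_mul_comm_pow A B
  rw [hBA] at key
  have hcp : (ρ * spinFlip ρ).charpoly = (X - C (a:ℂ)) * (X - C (b:ℂ)) * X ^ 2 := by
    rw [hAB]
    apply mul_right_cancel₀ (pow_ne_zero 2 (X_ne_zero : (X : ℂ[X]) ≠ 0))
    rw [key]
    ring
  have hconc : concurrence ρ = Real.sqrt Δ := by
    rw [concurrence_of_charpoly2 ρ a b hb0 hba hcp, hadef, hbdef,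
      Real.sqrt_sq hm0, Real.sqrt_sq hn0]
    ring
  refine ⟨hΔ, ?_, ?_, ?_⟩
  · rw [hconc]
  · rw [hconc]
    calc Real.sqrt Δ < Real.sqrt (ξ ^ 2) := Real.sqrt_lt_sqrt hΔ hΔlt
    _ = |ξ| := Real.sqrt_sq_eq_abs ξ
  · rw [concurrence_pure, concurrence_pure, ← hr₁₁, ← hr₂₂, hξ]
    calc |p * r₁₁ + (1 - p) * r₂₂| ≤ |p * r₁₁| + |(1 - p) * r₂₂| := abs_add_le _ _
    _ = p * |r₁₁| + (1 - p) * |r₂₂| := by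
        rw [abs_mul, abs_mul, abs_of_pos hp0, abs_of_pos hq0]
end

section
/- Let ψ₁, ψ₂ ∈ ℝ⁴ be linearly independent real unit vectors, let p ∈ (0,1), and set ρ = p ψ₁ψ₁ᵀ + (1−p) ψ₂ψ₂ᵀ, r_{ij} = ψᵢᵀ J ψ_j and χ = r₁₁r₂₂ − r₁₂². If χ < 0, then the concurrence satisfies C(ρ) = |p r₁₁ + (1−p) r₂₂| = |tr(Jρ)|. -/
open Matrix Polynomial

private lemma det_fin_four' {R : Type*} [CommRing R] (A : Matrix (Fin 4) (Fin 4) R) :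
    A.det = A 0 0*A 1 1*A 2 2*A 3 3 - A 0 0*A 1 1*A 2 3*A 3 2 - A 0 0*A 1 2*A 2 1*A 3 3
      + A 0 0*A 1 2*A 2 3*A 3 1 + A 0 0*A 1 3*A 2 1*A 3 2 - A 0 0*A 1 3*A 2 2*A 3 1
      - A 0 1*A 1 0*A 2 2*A 3 3 + A 0 1*A 1 0*A 2 3*A 3 2 + A 0 1*A 1 2*A 2 0*A 3 3
      - A 0 1*A 1 2*A 2 3*A 3 0 - A 0 1*A 1 3*A 2 0*A 3 2 + A 0 1*A 1 3*A 2 2*A 3 0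
      + A 0 2*A 1 0*A 2 1*A 3 3 - A 0 2*A 1 0*A 2 3*A 3 1 - A 0 2*A 1 1*A 2 0*A 3 3
      + A 0 2*A 1 1*A 2 3*A 3 0 + A 0 2*A 1 3*A 2 0*A 3 1 - A 0 2*A 1 3*A 2 1*A 3 0
      - A 0 3*A 1 0*A 2 1*A 3 2 + A 0 3*A 1 0*A 2 2*A 3 1 + A 0 3*A 1 1*A 2 0*A 3 2
      - A 0 3*A 1 1*A 2 2*A 3 0 - A 0 3*A 1 2*A 2 0*A 3 1 + A 0 3*A 1 2*A 2 1*A 3 0 := by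
  rw [Matrix.det_succ_row_zero, Fin.sum_univ_four]
  simp [Matrix.det_fin_three, Matrix.submatrix_apply, Fin.succAbove]
  norm_num [Fin.lt_def, show (Fin.succ 2 : Fin 4) = 3 from rfl,
    show (Fin.castSucc 2 : Fin 4) = 2 from rfl, show ((3:Fin 4) : ℕ) = 3 from rfl]
  ring

private lemma charpoly_rank2 (v₁ v₂ w₁ w₂ : Fin 4 → ℝ) :
    (Matrix.vecMulVec v₁ w₁ + Matrix.vecMulVec v₂ w₂).charpoly
      = X^4 - C (v₁ ⬝ᵥ w₁ + v₂ ⬝ᵥ w₂) * X^3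
        + C ((v₁ ⬝ᵥ w₁) * (v₂ ⬝ᵥ w₂) - (v₁ ⬝ᵥ w₂) * (v₂ ⬝ᵥ w₁)) * X^2 := by
  rw [Matrix.charpoly, det_fin_four']
  simp only [Matrix.charmatrix_apply, Matrix.diagonal_apply, Fin.reduceEq, reduceIte,
    Matrix.add_apply, Matrix.vecMulVec_apply, dotProduct, Fin.sum_univ_four,
    Polynomial.C_add, Polynomial.C_mul, Polynomial.C_sub, Polynomial.C_neg,
    ne_eq, Fin.isValue, not_false_eq_true]
  ring

set_option maxHeartbeats 4000000 in
/-- Rank-2 mixtures of real pure states with `χ = r₁₁r₂₂ − r₁₂² < 0`: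
the concurrence is `|p r₁₁ + (1−p) r₂₂| = |tr(Jρ)|`. -/
theorem rank_two_chi_neg
    (ψ₁ ψ₂ : Fin 4 → ℝ) (hind : LinearIndependent ℝ ![ψ₁, ψ₂])
    (h₁ : ∑ i, ψ₁ i ^ 2 = 1) (h₂ : ∑ i, ψ₂ i ^ 2 = 1)
    (p : ℝ) (hp : p ∈ Set.Ioo (0 : ℝ) 1)
    (ρ : Matrix (Fin 4) (Fin 4) ℂ)
    (hρ : ρ = p • pureState ψ₁ + (1 - p) • pureState ψ₂)
    (r₁₁ r₂₂ r₁₂ χ : ℝ)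
    (hr₁₁ : r₁₁ = ψ₁ ⬝ᵥ (Jr *ᵥ ψ₁)) (hr₂₂ : r₂₂ = ψ₂ ⬝ᵥ (Jr *ᵥ ψ₂))
    (hr₁₂ : r₁₂ = ψ₁ ⬝ᵥ (Jr *ᵥ ψ₂))
    (hχ : χ = r₁₁ * r₂₂ - r₁₂ ^ 2) (hχneg : χ < 0) :
    concurrence ρ = |p * r₁₁ + (1 - p) * r₂₂| ∧
    |p * r₁₁ + (1 - p) * r₂₂| = ‖Matrix.trace (Jc * ρ)‖ := by
  obtain ⟨hp0, hp1⟩ := hp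
  set q : ℝ := 1 - p with hq
  have hq0 : 0 < q := by simp only [hq]; linarith
  have hpq : 0 < p * q := mul_pos hp0 hq0
  -- component formulas
  have e11 : r₁₁ = 2*(ψ₁ 1 * ψ₁ 2 - ψ₁ 0 * ψ₁ 3) := by
    rw [hr₁₁]
    simp [Jr, Matrix.mulVec, dotProduct, Fin.sum_univ_four, Matrix.vecHead, Matrix.vecTail]
    ring
  have e22 : r₂₂ = 2*(ψ₂ 1 * ψ₂ 2 - ψ₂ 0 * ψ₂ 3) := by
    rw [hr₂₂]
    simp [Jr, Matrix.mulVec, dotProduct, Fin.sum_univ_four, Matrix.vecHead, Matrix.vecTail]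
    ring
  have e12 : r₁₂ = ψ₁ 1 * ψ₂ 2 + ψ₁ 2 * ψ₂ 1 - ψ₁ 0 * ψ₂ 3 - ψ₁ 3 * ψ₂ 0 := by
    rw [hr₁₂]
    simp [Jr, Matrix.mulVec, dotProduct, Fin.sum_univ_four, Matrix.vecHead, Matrix.vecTail]
    ring
  -- the real matrices
  set S : Matrix (Fin 4) (Fin 4) ℝ := p • Matrix.vecMulVec ψ₁ ψ₁ + q • Matrix.vecMulVec ψ₂ ψ₂
    with hS
  set w₁ : Fin 4 → ℝ := fun j => p*p*r₁₁*(Jr *ᵥ ψ₁) j + p*q*r₁₂*(Jr *ᵥ ψ₂) j with hw₁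
  set w₂ : Fin 4 → ℝ := fun j => p*q*r₁₂*(Jr *ᵥ ψ₁) j + q*q*r₂₂*(Jr *ᵥ ψ₂) j with hw₂
  have hρS : ρ = S.map Complex.ofRealHom := by
    rw [hρ, hS]
    ext i j
    simp [pureState, Matrix.map_apply, Matrix.smul_apply, Matrix.add_apply]
  have hJcJr : Jc = Jr.map Complex.ofRealHom := by
    ext i j
    fin_cases i <;> fin_cases j <;> simp [Jc, Jr, Matrix.vecHead, Matrix.vecTail]
  have hconj : (S.map Complex.ofRealHom).map (starRingEnd ℂ) = S.map Complex.ofRealHom := by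
    ext i j; simp [Matrix.map_apply, Complex.conj_ofReal]
  have hprod : ρ * spinFlip ρ = (S * (Jr * S * Jr)).map Complex.ofRealHom := by
    rw [spinFlip, hρS, hconj, hJcJr, ← Matrix.map_mul, ← Matrix.map_mul, ← Matrix.map_mul]
  have hMr : S * (Jr * S * Jr) = Matrix.vecMulVec ψ₁ w₁ + Matrix.vecMulVec ψ₂ w₂ := by
    rw [hS, hw₁, hw₂, e11, e22, e12]
    ext i j
    fin_cases j <;>
      (simp [Jr, Matrix.mul_apply, Fin.sum_univ_four, Matrix.vecMulVec_apply, Matrix.add_apply,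
        Matrix.smul_apply, Matrix.mulVec, Matrix.vecMul, dotProduct, Matrix.vecHead,
        Matrix.vecTail]
       ring)
  -- trace and determinant of the 2×2 compression
  set t : ℝ := p^2*r₁₁^2 + 2*p*q*r₁₂^2 + q^2*r₂₂^2 with ht
  set d : ℝ := p^2*q^2*χ^2 with hd
  have hv₁ : ψ₁ ⬝ᵥ w₁ + ψ₂ ⬝ᵥ w₂ = t := by
    rw [hw₁, hw₂, ht, e11, e22, e12]
    simp [Jr, Matrix.mulVec, dotProduct, Fin.sum_univ_four, Matrix.vecHead, Matrix.vecTail]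
    ring
  have hv₂ : (ψ₁ ⬝ᵥ w₁) * (ψ₂ ⬝ᵥ w₂) - (ψ₁ ⬝ᵥ w₂) * (ψ₂ ⬝ᵥ w₁) = d := by
    rw [hw₁, hw₂, hd, hχ, e11, e22, e12]
    simp [Jr, Matrix.mulVec, dotProduct, Fin.sum_univ_four, Matrix.vecHead, Matrix.vecTail]
    ring
  have hcp : (ρ * spinFlip ρ).charpoly
      = X^4 - C ((t : ℝ) : ℂ) * X^3 + C ((d : ℝ) : ℂ) * X^2 := by
    rw [hprod, Matrix.charpoly_map, hMr, charpoly_rank2, hv₁, hv₂]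
    simp [Polynomial.map_add, Polynomial.map_sub, Polynomial.map_pow, Polynomial.map_mul,
      Polynomial.map_X, Polynomial.map_C]
  -- positivity facts
  have key1 : t + 2*(p*q)*χ = (p*r₁₁ + q*r₂₂)^2 := by rw [ht, hχ]; ring
  have key2 : t - 2*(p*q)*χ = (p*r₁₁ - q*r₂₂)^2 + 4*(p*q)*r₁₂^2 := by rw [ht, hχ]; ring
  have ht0 : 0 ≤ t := by nlinarith [sq_nonneg (p*r₁₁), sq_nonneg (q*r₂₂), sq_nonneg r₁₂]
  have hd0 : 0 ≤ d := by rw [hd]; positivity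
  have hdisc0 : 0 ≤ t^2 - 4*d := by
    have h1 : 0 ≤ t + 2*(p*q)*χ := key1 ▸ sq_nonneg _
    have h2 : 0 ≤ t - 2*(p*q)*χ := by nlinarith [sq_nonneg (p*r₁₁ - q*r₂₂), sq_nonneg r₁₂]
    nlinarith [mul_nonneg h1 h2]
  set s : ℝ := Real.sqrt (t^2 - 4*d) with hsdef
  have hs0 : 0 ≤ s := Real.sqrt_nonneg _
  have hs2 : s^2 = t^2 - 4*d := Real.sq_sqrt hdisc0
  have hst : s ≤ t := by nlinarith
  set μ₁ : ℝ := (t + s)/2 with hμ₁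
  set μ₂ : ℝ := (t - s)/2 with hμ₂
  have hμ₂0 : 0 ≤ μ₂ := by rw [hμ₂]; linarith
  have hμ₂₁ : μ₂ ≤ μ₁ := by rw [hμ₁, hμ₂]; linarith
  have hμ₁0 : 0 ≤ μ₁ := le_trans hμ₂0 hμ₂₁
  have hsum : μ₁ + μ₂ = t := by rw [hμ₁, hμ₂]; ring
  have hprodμ : μ₁ * μ₂ = d := by
    rw [hμ₁, hμ₂]
    linear_combination (-(1:ℝ)/4) * hs2
  -- factor the characteristic polynomial
  have hfac : (ρ * spinFlip ρ).charpoly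
      = (({0, 0, (μ₂ : ℂ), (μ₁ : ℂ)} : Multiset ℂ).map (fun a => X - C a)).prod := by
    rw [hcp]
    have hsC : ((μ₁ : ℂ)) + ((μ₂ : ℂ)) = ((t : ℝ) : ℂ) := by
      rw [← Complex.ofReal_add, hsum]
    have hpC : ((μ₁ : ℂ)) * ((μ₂ : ℂ)) = ((d : ℝ) : ℂ) := by
      rw [← Complex.ofReal_mul, hprodμ]
    rw [← hsC, ← hpC]
    simp only [Multiset.insert_eq_cons, Multiset.map_cons, Multiset.map_singleton,
      Multiset.prod_cons, Multiset.prod_singleton, Polynomial.C_add,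
      Polynomial.C_mul, Polynomial.C_0]
    ring
  have hroots : (ρ * spinFlip ρ).charpoly.roots = {0, 0, (μ₂ : ℂ), (μ₁ : ℂ)} := by
    rw [hfac, Polynomial.roots_multiset_prod_X_sub_C]
  have hre : ((ρ * spinFlip ρ).charpoly.roots.map Complex.re) = ({0, 0, μ₂, μ₁} : Multiset ℝ) := by
    rw [hroots]
    simp [Multiset.insert_eq_cons, Complex.ofReal_re]
  have hsortlist : (((ρ * spinFlip ρ).charpoly.roots.map Complex.re).sort (· ≤ ·))
      = [0, 0, μ₂, μ₁] := by
    rw [hre]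
    refine (fun hp h1 h2 => List.Perm.eq_of_pairwise' (r := (· ≤ ·)) h1 h2 hp) ?_ ?_ ?_
    · rw [← Multiset.coe_eq_coe, Multiset.sort_eq]
      rfl
    · exact Multiset.pairwise_sort _ _
    · simp only [List.pairwise_cons, List.mem_cons, List.mem_singleton, List.Pairwise.nil,
        List.not_mem_nil]
      refine ⟨fun b hb => ?_, fun b hb => ?_, fun b hb => ?_, fun b hb => hb.elim, trivial⟩ <;>
        rcases hb with h | h | h | h | h <;> linarith
  -- square root algebra
  have hsqrtd : Real.sqrt μ₁ * Real.sqrt μ₂ = p*q*(-χ) := by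
    rw [← Real.sqrt_mul hμ₁0, hprodμ, hd]
    have : p^2*q^2*χ^2 = (p*q*(-χ))^2 := by ring
    rw [this, Real.sqrt_sq (by nlinarith)]
  have habs : Real.sqrt μ₁ - Real.sqrt μ₂ = |p*r₁₁ + q*r₂₂| := by
    have hnn : 0 ≤ Real.sqrt μ₁ - Real.sqrt μ₂ := by
      have := Real.sqrt_le_sqrt hμ₂₁
      linarith
    have hsq : (Real.sqrt μ₁ - Real.sqrt μ₂)^2 = (p*r₁₁ + q*r₂₂)^2 := by
      have h1 : Real.sqrt μ₁ ^ 2 = μ₁ := Real.sq_sqrt hμ₁0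
      have h2 : Real.sqrt μ₂ ^ 2 = μ₂ := Real.sq_sqrt hμ₂0
      have expand : (Real.sqrt μ₁ - Real.sqrt μ₂)^2
          = Real.sqrt μ₁^2 + Real.sqrt μ₂^2 - 2*(Real.sqrt μ₁ * Real.sqrt μ₂) := by ring
      rw [expand, h1, h2, hsqrtd]
      linear_combination hsum + key1
    calc Real.sqrt μ₁ - Real.sqrt μ₂
        = Real.sqrt ((Real.sqrt μ₁ - Real.sqrt μ₂)^2) := (Real.sqrt_sq hnn).symm
      _ = Real.sqrt ((p*r₁₁ + q*r₂₂)^2) := by rw [hsq]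
      _ = |p*r₁₁ + q*r₂₂| := Real.sqrt_sq_eq_abs _
  have hconc : concurrence ρ = |p * r₁₁ + q * r₂₂| := by
    rw [concurrence]
    simp only [hsortlist]
    simp only [List.getD_eq_getElem?_getD, List.getElem?_cons_succ, List.getElem?_cons_zero, Option.getD_some, Real.sqrt_zero, sub_zero]
    rw [habs]
    exact max_eq_right (abs_nonneg _)
  constructor
  · exact hconc
  · have htr : Matrix.trace (Jc * ρ) = ((p*r₁₁ + q*r₂₂ : ℝ) : ℂ) := by
      rw [hρ, e11, e22]
      simp [Matrix.trace, Matrix.mul_apply, Fin.sum_univ_four, Jc, pureState,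
        Matrix.vecMulVec_apply, Matrix.diag, Matrix.map_apply, Matrix.add_apply,
        Matrix.smul_apply, Matrix.vecHead, Matrix.vecTail]
      push_cast
      ring
    rw [htr, Complex.norm_real, Real.norm_eq_abs]
end

section
/- Let ψ₁, ψ₂ ∈ ℝ⁴ be linearly independent real unit vectors and set r_{ij} = ψᵢᵀ J ψ_j. If r₁₁ r₂₂ > 0 and r₁₁r₂₂ − r₁₂² < 0, then for every p ∈ [0,1] the mixture ρ = p ψ₁ψ₁ᵀ + (1−p) ψ₂ψ₂ᵀ is optimally entangled: C(ρ) = p C(ψ₁ψ₁ᵀ) + (1−p) C(ψ₂ψ₂ᵀ) = p|r₁₁| + (1−p)|r₂₂|. -/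
open Matrix Polynomial

noncomputable section Aux

/-- Sylvester-style characteristic polynomial identity for a 4×2 times 2×4 product. -/
lemma aux_sylvester (U : Matrix (Fin 4) (Fin 2) ℝ) (V : Matrix (Fin 2) (Fin 4) ℝ) :
    (U * V).charpoly = X ^ 2 * (V * U).charpoly := by
  set K := FractionRing (Polynomial ℝ)
  have φinj : Function.Injective (algebraMap (Polynomial ℝ) K) :=
    IsFractionRing.injective _ _
  apply φinj
  set φ : Polynomial ℝ →+* K := algebraMap (Polynomial ℝ) K with hφ
  set g : ℝ →+* K := φ.comp Polynomial.C with hg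
  set x : K := φ X with hx
  have hxne : x ≠ 0 := by
    simp only [hx]
    intro h
    exact X_ne_zero (φinj (by simpa using h))
  have hchar : ∀ (n : ℕ) (M : Matrix (Fin n) (Fin n) ℝ),
      φ M.charpoly = (x • (1 : Matrix (Fin n) (Fin n) K) - M.map g).det := by
    intro n M
    rw [Matrix.charpoly, RingHom.map_det]
    congr 1
    ext i j
    by_cases h : i = j
    · subst h
      simp [charmatrix_apply_eq, Matrix.map_apply, Matrix.one_apply, hg, hx]
    · simp [charmatrix_apply_ne _ _ _ h, Matrix.map_apply, Matrix.one_apply, h, hg]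
  rw [_root_.map_mul, map_pow, hchar, hchar, Matrix.map_mul, Matrix.map_mul]
  set A := U.map g
  set B := V.map g
  have h4 : x • (1 : Matrix (Fin 4) (Fin 4) K) - A * B
      = x • ((1 : Matrix (Fin 4) (Fin 4) K) - (x⁻¹ • A) * B) := by
    rw [smul_sub, Matrix.smul_mul, smul_smul, mul_inv_cancel₀ hxne, one_smul]
  have h2 : (1 : Matrix (Fin 2) (Fin 2) K) - B * (x⁻¹ • A)
      = x⁻¹ • (x • (1 : Matrix (Fin 2) (Fin 2) K) - B * A) := by
    rw [smul_sub, smul_smul, inv_mul_cancel₀ hxne, one_smul, Matrix.mul_smul]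
  rw [h4, Matrix.det_smul, Matrix.det_one_sub_mul_comm, h2, Matrix.det_smul]
  simp only [Fintype.card_fin]
  rw [← hx]
  rw [← mul_assoc, inv_pow, show x ^ 4 = x ^ 2 * x ^ 2 by ring, mul_assoc (x ^ 2) (x ^ 2),
    mul_inv_cancel₀ (pow_ne_zero 2 hxne)]
  ring

lemma aux_charpoly_fin_two (a b c d : ℝ) :
    (!![a, b; c, d]).charpoly = X ^ 2 - C (a + d) * X + C (a * d - b * c) := by
  rw [Matrix.charpoly, Matrix.det_fin_two, charmatrix_apply_eq,
    charmatrix_apply_eq, charmatrix_apply_ne _ _ _ (by decide),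
    charmatrix_apply_ne _ _ _ (by decide)]
  simp [_root_.map_add, _root_.map_sub, _root_.map_mul]
  ring

lemma aux_sort_coe (l : List ℝ) (h : l.Pairwise (· ≤ ·)) :
    Multiset.sort (↑l : Multiset ℝ) (· ≤ ·) = l :=
  List.Perm.eq_of_pairwise' (Multiset.pairwise_sort _ _) h
    (Multiset.coe_eq_coe.mp (Multiset.sort_eq _ _))

/-- The key computation: the concurrence of a nonnegative mixture of two real
pure states, under the cross-term condition. -/
lemma aux_key (ψ₁ ψ₂ : Fin 4 → ℝ) (w₁ w₂ : ℝ)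
    (hd : w₁ * w₂ * ((ψ₁ ⬝ᵥ (Jr *ᵥ ψ₁)) * (ψ₂ ⬝ᵥ (Jr *ᵥ ψ₂)) - (ψ₁ ⬝ᵥ (Jr *ᵥ ψ₂)) ^ 2) ≤ 0) :
    concurrence (w₁ • pureState ψ₁ + w₂ • pureState ψ₂)
      = |w₁ * (ψ₁ ⬝ᵥ (Jr *ᵥ ψ₁)) + w₂ * (ψ₂ ⬝ᵥ (Jr *ᵥ ψ₂))| := by
  set r₁₁ := ψ₁ ⬝ᵥ (Jr *ᵥ ψ₁) with hr₁₁
  set r₂₂ := ψ₂ ⬝ᵥ (Jr *ᵥ ψ₂) with hr₂₂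
  set r₁₂ := ψ₁ ⬝ᵥ (Jr *ᵥ ψ₂) with hr₁₂
  set t := w₁ * r₁₁ + w₂ * r₂₂ with ht
  set d := w₁ * w₂ * (r₁₁ * r₂₂ - r₁₂ ^ 2) with hdd
  -- the real matrices
  set U : Matrix (Fin 4) (Fin 2) ℝ := Matrix.of fun i k => (![w₁, w₂] k) * (![ψ₁, ψ₂] k i) with hU
  set Pt : Matrix (Fin 2) (Fin 4) ℝ := Matrix.of fun k j => ![ψ₁, ψ₂] k j with hPt
  set Rρ : Matrix (Fin 4) (Fin 4) ℝ :=
    w₁ • Matrix.vecMulVec ψ₁ ψ₁ + w₂ • Matrix.vecMulVec ψ₂ ψ₂ with hRρ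
  have hR : Rρ = U * Pt := by
    ext i j
    simp [hRρ, hU, hPt, Matrix.mul_apply, Fin.sum_univ_two, Matrix.vecMulVec_apply]
    ring
  have hG : Pt * Jr * U = !![w₁*r₁₁, w₂*r₁₂; w₁*r₁₂, w₂*r₂₂] := by
    ext k l
    fin_cases k <;> fin_cases l <;>
      simp [hPt, hU, hr₁₁, hr₂₂, hr₁₂, Matrix.mul_apply, Matrix.mulVec, dotProduct,
        Fin.sum_univ_four, Fin.sum_univ_two, Jr, Matrix.vecHead, Matrix.vecTail,
        Function.comp] <;> ring
  have hN : Rρ * Jr * Rρ * Jr = U * (Pt * Jr * (U * Pt) * Jr) := by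
    rw [hR]; simp only [Matrix.mul_assoc]
  have hcharR : (Rρ * Jr * Rρ * Jr).charpoly
      = X ^ 2 * (X ^ 2 - C (t ^ 2 - 2 * d) * X + C (d ^ 2)) := by
    rw [hN, aux_sylvester]
    congr 1
    have hVU : (Pt * Jr * (U * Pt) * Jr) * U = (Pt * Jr * U) * (Pt * Jr * U) := by
      simp only [Matrix.mul_assoc]
    have ha : w₁ * r₁₁ * (w₁ * r₁₁) + w₂ * r₁₂ * (w₁ * r₁₂)
        + (w₁ * r₁₂ * (w₂ * r₁₂) + w₂ * r₂₂ * (w₂ * r₂₂)) = t ^ 2 - 2 * d := by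
      simp only [ht, hdd]; ring
    have hb : (w₁ * r₁₁ * (w₁ * r₁₁) + w₂ * r₁₂ * (w₁ * r₁₂))
          * (w₁ * r₁₂ * (w₂ * r₁₂) + w₂ * r₂₂ * (w₂ * r₂₂))
        - (w₁ * r₁₁ * (w₂ * r₁₂) + w₂ * r₁₂ * (w₂ * r₂₂))
          * (w₁ * r₁₂ * (w₁ * r₁₁) + w₂ * r₂₂ * (w₁ * r₁₂)) = d ^ 2 := by
      simp only [hdd]; ring
    rw [hVU, hG, Matrix.mul_fin_two, aux_charpoly_fin_two, ha, hb]
  -- the complex side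
  set ρ : Matrix (Fin 4) (Fin 4) ℂ := w₁ • pureState ψ₁ + w₂ • pureState ψ₂ with hρdef
  have hρ : ρ = Rρ.map Complex.ofRealHom := by
    ext i j
    simp only [hρdef, hRρ, Matrix.add_apply, Matrix.smul_apply, Matrix.map_apply,
      Matrix.vecMulVec_apply, pureState, Complex.real_smul, Complex.ofReal_add,
      Complex.ofReal_mul, Complex.ofRealHom_eq_coe, smul_eq_mul]
    try push_cast
    try ring
  have hconj : ρ.map (starRingEnd ℂ) = ρ := by
    rw [hρ]
    ext i j
    simp [Matrix.map_apply, Complex.conj_ofReal]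
  have hJc : Jc = Jr.map Complex.ofRealHom := by
    ext i j
    fin_cases i <;> fin_cases j <;>
      simp [Jc, Jr, Matrix.vecHead, Matrix.vecTail, Function.comp]
  have hprodm : ρ * spinFlip ρ = (Rρ * Jr * Rρ * Jr).map Complex.ofRealHom := by
    rw [spinFlip, hconj, hJc, hρ]
    simp only [← Matrix.map_mul]
    congr 1
    simp only [Matrix.mul_assoc]
  -- square-root data
  have hD : (0:ℝ) ≤ t ^ 2 - 4 * d := by nlinarith [sq_nonneg t]
  set sq := Real.sqrt (t ^ 2 - 4 * d) with hsqdef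
  have hsq : sq ^ 2 = t ^ 2 - 4 * d := Real.sq_sqrt hD
  set lp := (t + sq) / 2 with hlpdef
  set lm := (t - sq) / 2 with hlmdef
  have hsum : lp ^ 2 + lm ^ 2 = t ^ 2 - 2 * d := by
    have h : lp ^ 2 + lm ^ 2 = (t ^ 2 + sq ^ 2) / 2 := by rw [hlpdef, hlmdef]; ring
    rw [h, hsq]; ring
  have hprod2 : lp ^ 2 * lm ^ 2 = d ^ 2 := by
    have h : lp ^ 2 * lm ^ 2 = ((t ^ 2 - sq ^ 2) / 4) ^ 2 := by rw [hlpdef, hlmdef]; ring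
    rw [h, hsq]; ring
  -- the characteristic polynomial over ℂ, fully factored
  have hcc : (ρ * spinFlip ρ).charpoly
      = ((({0, 0, ((lp ^ 2 : ℝ) : ℂ), ((lm ^ 2 : ℝ) : ℂ)} : Multiset ℂ)).map
          fun a => X - C a).prod := by
    rw [hprodm, Matrix.charpoly_map, hcharR]
    simp only [Polynomial.map_mul, Polynomial.map_pow, Polynomial.map_add, Polynomial.map_sub,
      Polynomial.map_X, Polynomial.map_C, Complex.ofRealHom_eq_coe]
    rw [← hsum, ← hprod2]
    simp only [Multiset.insert_eq_cons, Multiset.map_cons, Multiset.map_singleton,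
      Multiset.prod_cons, Multiset.prod_singleton, map_zero, sub_zero]
    push_cast
    simp only [_root_.map_add, _root_.map_mul, _root_.map_pow]
    ring
  have hroots : (ρ * spinFlip ρ).charpoly.roots
      = ({0, 0, ((lp ^ 2 : ℝ) : ℂ), ((lm ^ 2 : ℝ) : ℂ)} : Multiset ℂ) := by
    rw [hcc, Polynomial.roots_multiset_prod_X_sub_C]
  have hre : (ρ * spinFlip ρ).charpoly.roots.map Complex.re
      = ({0, 0, lp ^ 2, lm ^ 2} : Multiset ℝ) := by
    rw [hroots]
    simp only [Multiset.insert_eq_cons, Multiset.map_cons, Multiset.map_singleton,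
      Complex.zero_re, ← Complex.ofReal_pow, Complex.ofReal_re]
  set mα := min (lp ^ 2) (lm ^ 2) with hmadef
  set Mb := max (lp ^ 2) (lm ^ 2) with hMbdef
  have hms : ({0, 0, lp ^ 2, lm ^ 2} : Multiset ℝ) = (↑([0, 0, mα, Mb] : List ℝ) : Multiset ℝ) := by
    rcases le_total (lp ^ 2) (lm ^ 2) with h | h
    · rw [hmadef, hMbdef, min_eq_left h, max_eq_right h]; rfl
    · rw [hmadef, hMbdef, min_eq_right h, max_eq_left h]
      show (0 ::ₘ 0 ::ₘ lp ^ 2 ::ₘ {lm ^ 2}) = (0 ::ₘ 0 ::ₘ lm ^ 2 ::ₘ {lp ^ 2})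
      exact congrArg _ (congrArg _ (Multiset.cons_swap _ _ _))
  have h0ma : (0:ℝ) ≤ mα := le_min (sq_nonneg _) (sq_nonneg _)
  have hmaMb : mα ≤ Mb := min_le_max
  have hsorted : List.Pairwise (· ≤ ·) ([0, 0, mα, Mb] : List ℝ) := by
    refine List.Pairwise.cons (fun b hb => ?_) (List.Pairwise.cons (fun b hb => ?_)
      (List.Pairwise.cons (fun b hb => ?_) (List.Pairwise.cons (fun b hb => ?_)
        List.Pairwise.nil)))
    all_goals (simp only [List.mem_cons, List.mem_singleton, List.not_mem_nil, or_false] at hb <;>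
      first
        | (rcases hb with rfl | rfl | rfl <;> linarith)
        | (rcases hb with rfl | rfl <;> linarith)
        | (rcases hb with rfl <;> linarith)
        | exact absurd hb (by simp))
  have hsort : Multiset.sort
      (((ρ * spinFlip ρ).charpoly.roots.map Complex.re)) (· ≤ ·) = [0, 0, mα, Mb] := by
    rw [hre, hms, aux_sort_coe _ hsorted]
  -- bounds on lp, lm
  have habs : |t| ≤ sq := by
    rw [← Real.sqrt_sq_eq_abs, hsqdef]
    exact Real.sqrt_le_sqrt (by linarith)
  have hlp0 : 0 ≤ lp := by
    have := neg_abs_le t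
    rw [hlpdef]; linarith
  have hlm0 : lm ≤ 0 := by
    have := le_abs_self t
    rw [hlmdef]; linarith
  have hlpm : lp + lm = t := by rw [hlpdef, hlmdef]; ring
  -- finish
  rw [concurrence]
  simp only [hsort]
  simp only [List.getD_cons_succ, List.getD_cons_zero]
  rw [Real.sqrt_zero, sub_zero, sub_zero]
  have hmono : Monotone Real.sqrt := fun a b h => Real.sqrt_le_sqrt h
  have hsM : Real.sqrt Mb = max |lp| |lm| := by
    rw [hMbdef, hmono.map_max, Real.sqrt_sq_eq_abs, Real.sqrt_sq_eq_abs]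
  have hsm : Real.sqrt mα = min |lp| |lm| := by
    rw [hmadef, hmono.map_min, Real.sqrt_sq_eq_abs, Real.sqrt_sq_eq_abs]
  rw [hsM, hsm, max_sub_min_eq_abs, abs_of_nonneg hlp0, abs_of_nonpos hlm0]
  have hneg : -lm - lp = -t := by rw [hlpdef, hlmdef]; ring
  rw [hneg, abs_neg]
  exact max_eq_right (abs_nonneg t)

end Aux

/-- Optimality conditions for pairs: if `r₁₁ r₂₂ > 0` and `r₁₁r₂₂ − r₁₂² < 0`,
then every mixture of the two real pure states is optimally entangled. -/
theorem rank_two_optimal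
    (ψ₁ ψ₂ : Fin 4 → ℝ) (hind : LinearIndependent ℝ ![ψ₁, ψ₂])
    (h₁ : ∑ i, ψ₁ i ^ 2 = 1) (h₂ : ∑ i, ψ₂ i ^ 2 = 1)
    (r₁₁ r₂₂ r₁₂ : ℝ)
    (hr₁₁ : r₁₁ = ψ₁ ⬝ᵥ (Jr *ᵥ ψ₁)) (hr₂₂ : r₂₂ = ψ₂ ⬝ᵥ (Jr *ᵥ ψ₂))
    (hr₁₂ : r₁₂ = ψ₁ ⬝ᵥ (Jr *ᵥ ψ₂))
    (hpos : 0 < r₁₁ * r₂₂) (hχ : r₁₁ * r₂₂ - r₁₂ ^ 2 < 0) :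
    ∀ p ∈ Set.Icc (0 : ℝ) 1,
      concurrence (p • pureState ψ₁ + (1 - p) • pureState ψ₂) =
          p * concurrence (pureState ψ₁) + (1 - p) * concurrence (pureState ψ₂) ∧
      p * concurrence (pureState ψ₁) + (1 - p) * concurrence (pureState ψ₂) =
          p * |r₁₁| + (1 - p) * |r₂₂| := by
  intro p hp
  obtain ⟨hp0, hp1⟩ := hp
  have hC1 : concurrence (pureState ψ₁) = |r₁₁| := by
    have h : pureState ψ₁ = (1:ℝ) • pureState ψ₁ + (0:ℝ) • pureState ψ₁ := by simp
    rw [h, aux_key ψ₁ ψ₁ 1 0 (by simp)]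
    rw [hr₁₁]; norm_num
  have hC2 : concurrence (pureState ψ₂) = |r₂₂| := by
    have h : pureState ψ₂ = (1:ℝ) • pureState ψ₂ + (0:ℝ) • pureState ψ₂ := by simp
    rw [h, aux_key ψ₂ ψ₂ 1 0 (by simp)]
    rw [hr₂₂]; norm_num
  have hmix : concurrence (p • pureState ψ₁ + (1 - p) • pureState ψ₂)
      = |p * r₁₁ + (1 - p) * r₂₂| := by
    have hd : p * (1 - p) * ((ψ₁ ⬝ᵥ (Jr *ᵥ ψ₁)) * (ψ₂ ⬝ᵥ (Jr *ᵥ ψ₂))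
        - (ψ₁ ⬝ᵥ (Jr *ᵥ ψ₂)) ^ 2) ≤ 0 := by
      rw [← hr₁₁, ← hr₂₂, ← hr₁₂]
      have h1 : 0 ≤ p * (1 - p) := by nlinarith
      nlinarith
    rw [aux_key ψ₁ ψ₂ p (1 - p) hd, hr₁₁, hr₂₂]
  have habs : |p * r₁₁ + (1 - p) * r₂₂| = p * |r₁₁| + (1 - p) * |r₂₂| := by
    rcases mul_pos_iff.mp hpos with ⟨h1, h2⟩ | ⟨h1, h2⟩
    · rw [abs_of_pos h1, abs_of_pos h2, abs_of_nonneg (by nlinarith)]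
    · rw [abs_of_neg h1, abs_of_neg h2, abs_of_nonpos (by nlinarith)]
      ring
  refine ⟨?_, ?_⟩
  · rw [hmix, hC1, hC2, habs]
  · rw [hC1, hC2]
end

section
/- Let ψ₁, ψ₂, ψ₃ ∈ ℝ⁴ be linearly independent real unit vectors and let r be the 3×3 real symmetric matrix with entries r_{ij} = ψᵢᵀ J ψ_j. Suppose r_{ii} > 0 for i = 1,2,3, r_{ii}r_{jj} − r_{ij}² < 0 for all i ≠ j, and det(r) > 0. Then for every probability vector (p₁, p₂, p₃) with all pᵢ > 0, the mixture ρ = Σᵢ pᵢ ψᵢψᵢᵀ satisfies C(ρ) = Σᵢ pᵢ r_{ii} = Σᵢ pᵢ C(ψᵢψᵢᵀ). -/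
open Matrix Polynomial

variable {n : ℕ}

/-- charmatrix mapped by eval₂-at-e ring hom -/
lemma charmatrix_map_eval₂ {R : Type*} [CommRing R] [DecidableEq R] (W : Matrix (Fin n) (Fin n) R)
    (e : R[X]) :
    (charmatrix W).map (Polynomial.eval₂RingHom (Polynomial.C : R →+* R[X]) e) =
      Matrix.scalar (Fin n) e - W.map Polynomial.C := by
  ext i j
  by_cases h : i = j
  · subst h
    simp [charmatrix_apply_eq, Matrix.scalar_apply, Matrix.diagonal_apply_eq]
  · simp [charmatrix_apply_ne _ _ _ h, Matrix.scalar_apply, Matrix.diagonal_apply_ne _ h, h]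

lemma charpoly_comp_eq {R : Type*} [CommRing R] [DecidableEq R] (W : Matrix (Fin n) (Fin n) R)
    (e : R[X]) :
    W.charpoly.comp e = ((Matrix.scalar (Fin n) e) - W.map Polynomial.C).det := by
  have : W.charpoly.comp e = Polynomial.eval₂RingHom (Polynomial.C : R →+* R[X]) e W.charpoly := rfl
  rw [this, Matrix.charpoly, RingHom.map_det]
  congr 1
  exact charmatrix_map_eval₂ W e

lemma charpoly_sq (N : Matrix (Fin n) (Fin n) ℝ) :
    (N * N).charpoly.comp (X ^ 2) = N.charpoly * (N.charpoly.comp (-X)) * (-1)^n := by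
  classical
  have h1 : (N * N).charpoly.comp (X ^ 2) =
      ((Matrix.scalar (Fin n) ((X : ℝ[X]) ^ 2)) - (N * N).map Polynomial.C).det :=
    charpoly_comp_eq _ _
  have h2 : N.charpoly.comp (-X) =
      ((Matrix.scalar (Fin n) (-(X : ℝ[X]))) - N.map Polynomial.C).det :=
    charpoly_comp_eq _ _
  set Nc := N.map (Polynomial.C : ℝ →+* ℝ[X]) with hNc
  have hcomm : Commute (Matrix.scalar (Fin n) (X : ℝ[X])) Nc :=
    Matrix.scalar_commute _ (fun r => Commute.all _ _) _
  have hfact : (Matrix.scalar (Fin n) ((X : ℝ[X]) ^ 2)) - (N * N).map Polynomial.C =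
      (Matrix.scalar (Fin n) (X : ℝ[X]) - Nc) * (Matrix.scalar (Fin n) (X : ℝ[X]) + Nc) := by
    have hm : (N * N).map (Polynomial.C : ℝ →+* ℝ[X]) = Nc * Nc := by
      simp [hNc, Matrix.map_mul]
    have hs : Matrix.scalar (Fin n) ((X : ℝ[X]) ^ 2) =
        Matrix.scalar (Fin n) (X : ℝ[X]) * Matrix.scalar (Fin n) (X : ℝ[X]) := by
      rw [sq, _root_.map_mul (Matrix.scalar (Fin n))]
    rw [hm, hs]
    have hc := hcomm.eq
    rw [sub_mul, mul_add, mul_add, hc]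
    abel
  have hneg : ((Matrix.scalar (Fin n) (-(X : ℝ[X]))) - Nc).det =
      ((Matrix.scalar (Fin n) (X : ℝ[X]) + Nc)).det * (-1)^n := by
    have : (Matrix.scalar (Fin n) (-(X : ℝ[X]))) - Nc =
        -((Matrix.scalar (Fin n) (X : ℝ[X])) + Nc) := by
      rw [map_neg]; abel
    rw [this, Matrix.det_neg]
    simp [mul_comm]
  have hsq : ((-1 : ℝ[X])^n)*((-1)^n) = 1 := by
    rw [← pow_add]
    exact (neg_one_pow_eq_one_iff_even (by norm_num : (-1:ℝ[X]) ≠ 1)).2 (Even.add_self n)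
  rw [h1, hfact, Matrix.det_mul, h2, hneg]
  have hch : N.charpoly = ((Matrix.scalar (Fin n)) (X:ℝ[X]) - Nc).det := rfl
  rw [hch]
  linear_combination (-(((Matrix.scalar (Fin n)) (X:ℝ[X]) - Nc).det * ((Matrix.scalar (Fin n)) (X:ℝ[X]) + Nc).det)) * hsq

lemma comp_X_sq_inj {p q : ℝ[X]} (h : p.comp (X ^ 2) = q.comp (X ^ 2)) : p = q := by
  by_contra hne
  have h0 : (p - q).comp (X ^ 2) = 0 := by rw [Polynomial.sub_comp, h, sub_self]
  rcases Polynomial.comp_eq_zero_iff.1 h0 with h' | ⟨_, h'⟩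
  · exact hne (sub_eq_zero.1 h')
  · have := congrArg Polynomial.natDegree h'
    simp at this

lemma charpoly_conj_units {m : Type*} [Fintype m] [DecidableEq m] {R : Type*} [CommRing R]
    (V W D : Matrix m m R) (hVW : V * W = 1) (hWV : W * V = 1) :
    (V * D * W).charpoly = D.charpoly := by
  classical
  have hone : V.map (Polynomial.C : R →+* R[X]) * W.map Polynomial.C = 1 := by
    rw [← Matrix.map_mul, hVW]
    ext i j
    by_cases h : i = j <;> simp [h, Matrix.one_apply]
  have key : charmatrix (V * D * W) =
      V.map Polynomial.C * charmatrix D * W.map Polynomial.C := by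
    have hD : charmatrix D = Matrix.scalar m (X : R[X]) - D.map Polynomial.C := rfl
    have hVDW : charmatrix (V * D * W) =
        Matrix.scalar m (X : R[X]) - (V * D * W).map Polynomial.C := rfl
    have hcomm : V.map (Polynomial.C : R →+* R[X]) * (Matrix.scalar m (X : R[X])) =
        (Matrix.scalar m (X : R[X])) * V.map Polynomial.C :=
      ((Matrix.scalar_commute _ (fun r => Commute.all _ _) _).symm).eq
    rw [hD, hVDW, Matrix.mul_sub, Matrix.sub_mul, hcomm, mul_assoc, mul_assoc, hone, mul_one,
      ← Matrix.map_mul, ← Matrix.map_mul, mul_assoc]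
  rw [Matrix.charpoly, key, Matrix.det_mul, Matrix.det_mul, mul_comm, ← mul_assoc]
  rw [← Matrix.det_mul, ← Matrix.map_mul, hWV]
  simp [Matrix.charpoly]

lemma charpoly_diagonal {m : Type*} [Fintype m] [DecidableEq m] {R : Type*} [CommRing R]
    (d : m → R) : (Matrix.diagonal d).charpoly = ∏ i, (X - Polynomial.C (d i)) := by
  rw [Matrix.charpoly]
  have : charmatrix (Matrix.diagonal d) = Matrix.diagonal fun i => X - Polynomial.C (d i) := by
    ext i j
    by_cases h : i = j
    · subst h; simp [charmatrix_apply_eq]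
    · simp [charmatrix_apply_ne _ _ _ h, Matrix.diagonal_apply_ne _ h]
  rw [this, Matrix.det_diagonal]

lemma det_smul_one_sub_comm {F : Type*} [Field F] {m : Type*} [Fintype m] [DecidableEq m]
    {x : F} (hx : x ≠ 0) (A B : Matrix m m F) :
    (x • (1 : Matrix m m F) - A * B).det = (x • (1 : Matrix m m F) - B * A).det := by
  have h1 : x • (1 : Matrix m m F) - A * B = x • ((1 : Matrix m m F) - (x⁻¹ • A) * B) := by
    rw [smul_sub, Matrix.smul_mul, smul_smul, mul_inv_cancel₀ hx, one_smul]
  have h2 : x • (1 : Matrix m m F) - B * A = x • ((1 : Matrix m m F) - B * (x⁻¹ • A)) := by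
    rw [smul_sub, Matrix.mul_smul, smul_smul, mul_inv_cancel₀ hx, one_smul]
  rw [h1, h2, Matrix.det_smul, Matrix.det_smul, Matrix.det_one_sub_mul_comm]

lemma charmatrix_map_ringHom {m : Type*} [Fintype m] [DecidableEq m] {F : Type*} [Field F]
    (φ : ℝ[X] →+* F) (M : Matrix m m ℝ) :
    (charmatrix M).map φ = (φ X) • (1 : Matrix m m F) - M.map (φ.comp Polynomial.C) := by
  ext i j
  by_cases h : i = j
  · subst h; simp [charmatrix_apply_eq, Matrix.one_apply]
  · simp [charmatrix_apply_ne _ _ _ h, Matrix.one_apply, h]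

lemma charpoly_mul_comm {m : Type*} [Fintype m] [DecidableEq m] (A B : Matrix m m ℝ) :
    (A * B).charpoly = (B * A).charpoly := by
  classical
  set F := FractionRing ℝ[X]
  set φ := algebraMap ℝ[X] F with hφ
  have hinj : Function.Injective φ := IsFractionRing.injective _ _
  apply hinj
  have hx : φ X ≠ 0 := fun h => by
    have : (X : ℝ[X]) = 0 := hinj (by simpa using h)
    simp [Polynomial.X_ne_zero] at this
  have hmap : ∀ M : Matrix m m ℝ, φ (M.charpoly) =
      ((φ X) • (1 : Matrix m m F) - M.map (φ.comp Polynomial.C)).det := by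
    intro M
    rw [Matrix.charpoly, RingHom.map_det, RingHom.mapMatrix_apply, charmatrix_map_ringHom]
  rw [hmap, hmap]
  have hAB : (A * B).map (φ.comp Polynomial.C) =
      A.map (φ.comp Polynomial.C) * B.map (φ.comp Polynomial.C) := by
    rw [Matrix.map_mul]
  have hBA : (B * A).map (φ.comp Polynomial.C) =
      B.map (φ.comp Polynomial.C) * A.map (φ.comp Polynomial.C) := by
    rw [Matrix.map_mul]
  rw [hAB, hBA, det_smul_one_sub_comm hx]

lemma hermitian_facts {m : Type*} [Fintype m] [DecidableEq m] {M : Matrix m m ℝ}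
    (hM : M.IsHermitian) :
    M.charpoly = ∏ i, (X - Polynomial.C (hM.eigenvalues i)) ∧
    M.trace = ∑ i, hM.eigenvalues i ∧
    (M * M).trace = ∑ i, (hM.eigenvalues i) ^ 2 ∧
    M.det = ∏ i, hM.eigenvalues i := by
  classical
  set V : Matrix m m ℝ := (hM.eigenvectorUnitary : Matrix m m ℝ) with hV
  set W : Matrix m m ℝ := star V with hW
  have h1 : V * W = 1 := Matrix.mem_unitaryGroup_iff.mp hM.eigenvectorUnitary.2
  have h2 : W * V = 1 := Matrix.mem_unitaryGroup_iff'.mp hM.eigenvectorUnitary.2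
  set D : Matrix m m ℝ := Matrix.diagonal hM.eigenvalues with hD
  have hspec : M = V * D * W := by
    have := hM.spectral_theorem
    simpa [RCLike.ofReal_real_eq_id, hD, hV, hW] using this
  have hWVmul : ∀ x : Matrix m m ℝ, W * (V * x) = x := fun x => by
    rw [← Matrix.mul_assoc, h2, Matrix.one_mul]
  refine ⟨?_, ?_, ?_, ?_⟩
  · conv_lhs => rw [hspec]
    rw [charpoly_conj_units V W D h1 h2, hD, _root_.charpoly_diagonal]
  · conv_lhs => rw [hspec]
    rw [Matrix.trace_mul_cycle, h2, Matrix.one_mul, hD, Matrix.trace_diagonal]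
  · have hMM : M * M = V * (D * D) * W := by
      rw [hspec]
      simp only [Matrix.mul_assoc, hWVmul]
    rw [hMM, Matrix.trace_mul_cycle, h2, Matrix.one_mul, hD, Matrix.diagonal_mul_diagonal,
      Matrix.trace_diagonal]
    exact Finset.sum_congr rfl fun i _ => (sq _).symm
  · conv_lhs => rw [hspec]
    rw [Matrix.det_mul, Matrix.det_mul, mul_comm, ← mul_assoc, ← Matrix.det_mul, h2]
    simp [hD, Matrix.det_diagonal]

lemma signs_lemma {a b c : ℝ} (h1 : 0 < a + b + c) (h2 : a*b + a*c + b*c < 0)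
    (h3 : 0 < a*b*c) :
    ∃ x y z : ℝ, 0 < x ∧ y ≤ 0 ∧ z ≤ 0 ∧ x + y + z = a + b + c ∧
      ((X : ℝ[X]) - Polynomial.C x) * (X - Polynomial.C y) * (X - Polynomial.C z) =
        ((X : ℝ[X]) - Polynomial.C a) * (X - Polynomial.C b) * (X - Polynomial.C c) := by
  have ha : a ≠ 0 := by rintro rfl; simp at h3
  have hb : b ≠ 0 := by rintro rfl; simp at h3
  have hc : c ≠ 0 := by rintro rfl; simp at h3
  rcases ha.lt_or_gt with ha | ha <;> rcases hb.lt_or_gt with hb | hb <;>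
    rcases hc.lt_or_gt with hc | hc
  · exact absurd h1 (by nlinarith)
  · exact ⟨c, a, b, hc, ha.le, hb.le, by ring, by ring⟩
  · exact ⟨b, a, c, hb, ha.le, hc.le, by ring, by ring⟩
  · exact absurd h3 (by nlinarith [mul_pos hb hc])
  · exact ⟨a, b, c, ha, hb.le, hc.le, by ring, by ring⟩
  · exact absurd h3 (by nlinarith [mul_pos ha hc])
  · exact absurd h3 (by nlinarith [mul_pos ha hb])
  · exact absurd h2 (by nlinarith)

lemma multiset_rot (u v w : ℝ) : ({0, u, v, w} : Multiset ℝ) = ↑[0, v, w, u] := by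
  have h1 : ((↑[0, v, w, u] : Multiset ℝ)) = 0 ::ₘ v ::ₘ w ::ₘ u ::ₘ 0 := rfl
  have h2 : ({0, u, v, w} : Multiset ℝ) = 0 ::ₘ u ::ₘ v ::ₘ w ::ₘ 0 := rfl
  rw [h1, h2]
  congr 1
  rw [Multiset.cons_swap u v, Multiset.cons_swap u w]

lemma concurrence_master (A : Matrix (Fin 4) (Fin 4) ℝ) (ρ : Matrix (Fin 4) (Fin 4) ℂ)
    (hρ : ρ = A.map Complex.ofReal) (a b c : ℝ)
    (hchar : (A * Jr).charpoly =
      X * ((X - Polynomial.C a) * (X - Polynomial.C b) * (X - Polynomial.C c)))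
    (ha : 0 < a) (hb : b ≤ 0) (hc : c ≤ 0) (hs : 0 < a + b + c) :
    concurrence ρ = a + b + c := by
  have hofR : ∀ (W V : Matrix (Fin 4) (Fin 4) ℝ),
      (W.map Complex.ofReal) * (V.map Complex.ofReal) = (W*V).map Complex.ofReal := by
    intro W V; ext i j; simp [Matrix.mul_apply]
  have hconj : (A.map Complex.ofReal).map (starRingEnd ℂ) = A.map Complex.ofReal := by
    ext i j; simp
  have hJc : Jc = Jr.map Complex.ofReal := by
    ext i j; fin_cases i <;> fin_cases j <;> simp [Jc, Jr, Matrix.vecHead, Matrix.vecTail]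
  have hassoc : A * (Jr * A * Jr) = (A * Jr) * (A * Jr) := by
    simp only [Matrix.mul_assoc]
  have hprod : ρ * spinFlip ρ = ((A * Jr) * (A * Jr)).map Complex.ofReal := by
    rw [hρ]
    show (A.map Complex.ofReal) * (Jc * (A.map Complex.ofReal).map (starRingEnd ℂ) * Jc) = _
    rw [hconj, hJc, hofR, hofR, hofR, hassoc]
  have hq : ((A * Jr) * (A * Jr)).charpoly =
      X * ((X - Polynomial.C (a^2)) * (X - Polynomial.C (b^2)) * (X - Polynomial.C (c^2))) := by
    apply comp_X_sq_inj
    rw [charpoly_sq, hchar]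
    simp only [Polynomial.mul_comp, Polynomial.sub_comp, Polynomial.X_comp, Polynomial.C_comp]
    norm_num
    ring
  have hcharC : (ρ * spinFlip ρ).charpoly =
      Polynomial.map Complex.ofRealHom (((A * Jr) * (A * Jr)).charpoly) := by
    rw [hprod]
    exact Matrix.charpoly_map _ Complex.ofRealHom
  set s : Multiset ℂ := {0, ((a^2 : ℝ) : ℂ), ((b^2 : ℝ) : ℂ), ((c^2 : ℝ) : ℂ)} with hs'
  have hroots : (ρ * spinFlip ρ).charpoly.roots = s := by
    have hpoly2 : Polynomial.map Complex.ofRealHom (((A * Jr) * (A * Jr)).charpoly) =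
        (Multiset.map (fun u => X - Polynomial.C u) s).prod := by
      rw [hq]
      simp only [hs', Multiset.insert_eq_cons, Multiset.map_cons, Multiset.map_singleton,
        Multiset.prod_cons, Multiset.prod_singleton, Polynomial.map_mul, Polynomial.map_sub,
        Polynomial.map_X, Polynomial.map_C, map_zero, Polynomial.map_ofNat,
        Complex.ofRealHom_eq_coe]
      ring
    rw [hcharC, hpoly2, Polynomial.roots_multiset_prod_X_sub_C]
  have hre : (ρ * spinFlip ρ).charpoly.roots.map Complex.re =
      ({0, a^2, b^2, c^2} : Multiset ℝ) := by
    rw [hroots]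
    simp only [hs', Multiset.insert_eq_cons, Multiset.map_cons, Multiset.map_singleton,
      Complex.zero_re, Complex.ofReal_re]
  -- inequalities
  have hb2a : b^2 ≤ a^2 := by nlinarith
  have hc2a : c^2 ≤ a^2 := by nlinarith
  rcases le_total (b^2) (c^2) with hbc | hbc
  · have hL : (((ρ * spinFlip ρ).charpoly.roots.map Complex.re).sort (· ≤ ·)) =
        [0, b^2, c^2, a^2] := by
      refine (fun hp hs => List.Perm.eq_of_pairwise' (r := (· ≤ ·)) (Multiset.pairwise_sort _ _) hs hp) ?_ ?_
      · apply Multiset.coe_eq_coe.mp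
        rw [Multiset.sort_eq, hre, multiset_rot (a^2) (b^2) (c^2)]
      · norm_num [List.pairwise_cons]
        exact ⟨⟨sq_nonneg b, sq_nonneg c, sq_nonneg a⟩, ⟨hbc, hb2a⟩, hc2a⟩
    show max 0 (Real.sqrt _ - Real.sqrt _ - Real.sqrt _ - Real.sqrt _) = a + b + c
    rw [hL]
    have g3 : ([0, b^2, c^2, a^2].getD 3 0 : ℝ) = a^2 := rfl
    have g2 : ([0, b^2, c^2, a^2].getD 2 0 : ℝ) = c^2 := rfl
    have g1 : ([0, b^2, c^2, a^2].getD 1 0 : ℝ) = b^2 := rfl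
    have g0 : ([0, b^2, c^2, a^2].getD 0 0 : ℝ) = 0 := rfl
    rw [g3, g2, g1, g0, Real.sqrt_zero, Real.sqrt_sq ha.le, Real.sqrt_sq_eq_abs,
      Real.sqrt_sq_eq_abs, abs_of_nonpos hb, abs_of_nonpos hc]
    rw [max_eq_right (by linarith)]
    ring
  · have hL : (((ρ * spinFlip ρ).charpoly.roots.map Complex.re).sort (· ≤ ·)) =
        [0, c^2, b^2, a^2] := by
      refine (fun hp hs => List.Perm.eq_of_pairwise' (r := (· ≤ ·)) (Multiset.pairwise_sort _ _) hs hp) ?_ ?_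
      · apply Multiset.coe_eq_coe.mp
        rw [Multiset.sort_eq, hre]
        have : ({0, a^2, b^2, c^2} : Multiset ℝ) = {0, a^2, c^2, b^2} := by
          have h2 : ({0, a^2, b^2, c^2} : Multiset ℝ) = 0 ::ₘ a^2 ::ₘ b^2 ::ₘ c^2 ::ₘ 0 := rfl
          have h3 : ({0, a^2, c^2, b^2} : Multiset ℝ) = 0 ::ₘ a^2 ::ₘ c^2 ::ₘ b^2 ::ₘ 0 := rfl
          rw [h2, h3]
          congr 2
          exact Multiset.cons_swap _ _ _
        rw [this, multiset_rot (a^2) (c^2) (b^2)]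
      · norm_num [List.pairwise_cons]
        exact ⟨⟨sq_nonneg c, sq_nonneg b, sq_nonneg a⟩, ⟨hbc, hc2a⟩, hb2a⟩
    show max 0 (Real.sqrt _ - Real.sqrt _ - Real.sqrt _ - Real.sqrt _) = a + b + c
    rw [hL]
    have g3 : ([0, c^2, b^2, a^2].getD 3 0 : ℝ) = a^2 := rfl
    have g2 : ([0, c^2, b^2, a^2].getD 2 0 : ℝ) = b^2 := rfl
    have g1 : ([0, c^2, b^2, a^2].getD 1 0 : ℝ) = c^2 := rfl
    have g0 : ([0, c^2, b^2, a^2].getD 0 0 : ℝ) = 0 := rfl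
    rw [g3, g2, g1, g0, Real.sqrt_zero, Real.sqrt_sq ha.le, Real.sqrt_sq_eq_abs,
      Real.sqrt_sq_eq_abs, abs_of_nonpos hb, abs_of_nonpos hc]
    rw [max_eq_right (by linarith)]
    ring

lemma det_smul_one_sub_comm' {F : Type*} [Field F] {m l : Type*} [Fintype m] [DecidableEq m]
    [Fintype l] [DecidableEq l] (hcard : Fintype.card m = Fintype.card l)
    {x : F} (hx : x ≠ 0) (A : Matrix m l F) (B : Matrix l m F) :
    (x • (1 : Matrix m m F) - A * B).det = (x • (1 : Matrix l l F) - B * A).det := by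
  have h1 : x • (1 : Matrix m m F) - A * B = x • ((1 : Matrix m m F) - (x⁻¹ • A) * B) := by
    rw [smul_sub, Matrix.smul_mul, smul_smul, mul_inv_cancel₀ hx, one_smul]
  have h2 : x • (1 : Matrix l l F) - B * A = x • ((1 : Matrix l l F) - B * (x⁻¹ • A)) := by
    rw [smul_sub, Matrix.mul_smul, smul_smul, mul_inv_cancel₀ hx, one_smul]
  rw [h1, h2, Matrix.det_smul, Matrix.det_smul, Matrix.det_one_sub_mul_comm, hcard]

lemma charpoly_mul_comm' {m l : Type} [Fintype m] [DecidableEq m] [Fintype l] [DecidableEq l]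
    (hcard : Fintype.card m = Fintype.card l) (A : Matrix m l ℝ) (B : Matrix l m ℝ) :
    (A * B).charpoly = (B * A).charpoly := by
  classical
  set F := FractionRing ℝ[X]
  set φ := algebraMap ℝ[X] F with hφ
  have hinj : Function.Injective φ := IsFractionRing.injective _ _
  apply hinj
  have hx : φ X ≠ 0 := fun h => by
    have : (X : ℝ[X]) = 0 := hinj (by simpa using h)
    simp [Polynomial.X_ne_zero] at this
  have hmap : ∀ {k : Type} [Fintype k] [DecidableEq k] (M : Matrix k k ℝ), φ (M.charpoly) =
      ((φ X) • (1 : Matrix k k F) - M.map (φ.comp Polynomial.C)).det := by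
    intro k _ _ M
    rw [Matrix.charpoly, RingHom.map_det, RingHom.mapMatrix_apply, charmatrix_map_ringHom]
  rw [hmap, hmap]
  have hAB : (A * B).map (φ.comp Polynomial.C) =
      A.map (φ.comp Polynomial.C) * B.map (φ.comp Polynomial.C) := by rw [Matrix.map_mul]
  have hBA : (B * A).map (φ.comp Polynomial.C) =
      B.map (φ.comp Polynomial.C) * A.map (φ.comp Polynomial.C) := by rw [Matrix.map_mul]
  rw [hAB, hBA, det_smul_one_sub_comm' hcard hx]

lemma Jr_symm : ∀ i j : Fin 4, Jr i j = Jr j i := by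
  intro i j; fin_cases i <;> fin_cases j <;> norm_num [Jr]

lemma card_43 : Fintype.card (Fin 4) = Fintype.card (Fin 3 ⊕ Fin 1) := by simp

lemma charpoly_zero_block {k : ℕ} : (0 : Matrix (Fin k) (Fin k) ℝ).charpoly = X ^ k := by
  rw [← Matrix.diagonal_zero, _root_.charpoly_diagonal]
  simp

lemma pure_charpoly (ψ0 : Fin 4 → ℝ) :
    (Matrix.vecMulVec ψ0 ψ0 * Jr).charpoly =
      X ^ 3 * (X - Polynomial.C (ψ0 ⬝ᵥ (Jr *ᵥ ψ0))) := by
  classical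
  set B : Matrix (Fin 4) (Fin 3 ⊕ Fin 1) ℝ :=
    Matrix.of fun i k => Sum.elim (fun _ => (0:ℝ)) (fun _ => ψ0 i) k with hB
  set Cc : Matrix (Fin 4) (Fin 3 ⊕ Fin 1) ℝ :=
    Matrix.of fun i k => Sum.elim (fun _ => (0:ℝ)) (fun _ => (Jr *ᵥ ψ0) i) k with hCc
  have hBC : Matrix.vecMulVec ψ0 ψ0 * Jr = B * Ccᵀ := by
    ext i j
    simp only [Matrix.mul_apply, Matrix.vecMulVec_apply, Matrix.transpose_apply, hB, hCc,
      Matrix.of_apply, Fintype.sum_sum_type, Sum.elim_inl, Sum.elim_inr, zero_mul,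
      Finset.sum_const_zero, zero_add, Finset.univ_unique, Finset.sum_singleton]
    rw [Matrix.mulVec, dotProduct, Finset.mul_sum]
    apply Finset.sum_congr rfl
    intro m _
    rw [Jr_symm j m]
    ring
  have hCB : Ccᵀ * B = Matrix.fromBlocks 0 0 0
      (Matrix.of fun _ _ : Fin 1 => ψ0 ⬝ᵥ (Jr *ᵥ ψ0)) := by
    ext k l
    rcases k with k | k <;> rcases l with l | l <;>
      simp only [Matrix.mul_apply, Matrix.transpose_apply, hB, hCc, Matrix.of_apply,
        Sum.elim_inl, Sum.elim_inr, mul_zero, zero_mul, Finset.sum_const_zero,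
        Matrix.fromBlocks_apply₁₁, Matrix.fromBlocks_apply₁₂, Matrix.fromBlocks_apply₂₁,
        Matrix.fromBlocks_apply₂₂, Matrix.zero_apply]
    rw [dotProduct]
    apply Finset.sum_congr rfl
    intro m _
    ring
  have hD : (Matrix.of fun _ _ : Fin 1 => ψ0 ⬝ᵥ (Jr *ᵥ ψ0)) =
      Matrix.diagonal (fun _ : Fin 1 => ψ0 ⬝ᵥ (Jr *ᵥ ψ0)) := by
    ext k l
    fin_cases k <;> fin_cases l <;> simp
  rw [hBC, charpoly_mul_comm' card_43, hCB, Matrix.charpoly_fromBlocks_zero₁₂,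
    charpoly_zero_block, hD, _root_.charpoly_diagonal]
  simp

lemma pure_concurrence (ψ0 : Fin 4 → ℝ) (rv : ℝ) (hrv : rv = ψ0 ⬝ᵥ (Jr *ᵥ ψ0)) (hpos : 0 < rv) :
    concurrence (pureState ψ0) = rv := by
  have hchar : (Matrix.vecMulVec ψ0 ψ0 * Jr).charpoly =
      X * ((X - Polynomial.C rv) * (X - Polynomial.C 0) * (X - Polynomial.C 0)) := by
    rw [pure_charpoly, ← hrv]
    simp only [map_zero, sub_zero]
    ring
  have := concurrence_master (Matrix.vecMulVec ψ0 ψ0) (pureState ψ0) rfl rv 0 0 hchar hpos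
    le_rfl le_rfl (by linarith)
  simpa using this

lemma mix_charpoly (p : Fin 3 → ℝ) (hp : ∀ k, 0 < p k) (ψ : Fin 3 → Fin 4 → ℝ) :
    ((∑ k, p k • Matrix.vecMulVec (ψ k) (ψ k)) * Jr).charpoly =
      (Matrix.of fun k l : Fin 3 =>
        Real.sqrt (p k) * Real.sqrt (p l) * (ψ l ⬝ᵥ (Jr *ᵥ ψ k))).charpoly * X := by
  classical
  set B : Matrix (Fin 4) (Fin 3 ⊕ Fin 1) ℝ :=
    Matrix.of fun i k => Sum.elim (fun k0 : Fin 3 => Real.sqrt (p k0) * ψ k0 i)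
      (fun _ => (0:ℝ)) k with hB
  set Cc : Matrix (Fin 4) (Fin 3 ⊕ Fin 1) ℝ :=
    Matrix.of fun i k => Sum.elim (fun k0 : Fin 3 => Real.sqrt (p k0) * (Jr *ᵥ ψ k0) i)
      (fun _ => (0:ℝ)) k with hCc
  have hBC : (∑ k, p k • Matrix.vecMulVec (ψ k) (ψ k)) * Jr = B * Ccᵀ := by
    ext i j
    simp only [Matrix.mul_apply, Matrix.sum_apply, Matrix.smul_apply, Matrix.vecMulVec_apply,
      smul_eq_mul, Matrix.transpose_apply, hB, hCc, Matrix.of_apply, Fintype.sum_sum_type,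
      Sum.elim_inl, Sum.elim_inr, zero_mul, mul_zero, Finset.sum_const_zero, add_zero,
      Finset.sum_mul]
    rw [Finset.sum_comm]
    apply Finset.sum_congr rfl
    intro k _
    have hrw : Real.sqrt (p k) * ψ k i * (Real.sqrt (p k) * (Jr *ᵥ ψ k) j) =
        p k * (ψ k i * (Jr *ᵥ ψ k) j) := by
      rw [show Real.sqrt (p k) * ψ k i * (Real.sqrt (p k) * (Jr *ᵥ ψ k) j) =
        (Real.sqrt (p k) * Real.sqrt (p k)) * (ψ k i * (Jr *ᵥ ψ k) j) from by ring,
        Real.mul_self_sqrt (hp k).le]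
    rw [hrw, Matrix.mulVec, dotProduct, Finset.mul_sum, Finset.mul_sum]
    apply Finset.sum_congr rfl
    intro m _
    rw [Jr_symm j m]
    ring
  have hCB : Ccᵀ * B = Matrix.fromBlocks
      (Matrix.of fun k l : Fin 3 => Real.sqrt (p k) * Real.sqrt (p l) * (ψ l ⬝ᵥ (Jr *ᵥ ψ k)))
      0 0 (0 : Matrix (Fin 1) (Fin 1) ℝ) := by
    ext k l
    rcases k with k | k <;> rcases l with l | l <;>
      simp only [Matrix.mul_apply, Matrix.transpose_apply, hB, hCc, Matrix.of_apply,
        Sum.elim_inl, Sum.elim_inr, mul_zero, zero_mul, Finset.sum_const_zero,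
        Matrix.fromBlocks_apply₁₁, Matrix.fromBlocks_apply₁₂, Matrix.fromBlocks_apply₂₁,
        Matrix.fromBlocks_apply₂₂, Matrix.zero_apply]
    rw [dotProduct, Finset.mul_sum]
    apply Finset.sum_congr rfl
    intro m _
    ring
  rw [hBC, charpoly_mul_comm' card_43, hCB, Matrix.charpoly_fromBlocks_zero₁₂,
    charpoly_zero_block]
  simp [pow_one]

/-- Optimality for triples, Case 1: if `rᵢᵢ > 0`, `rᵢᵢrⱼⱼ − rᵢⱼ² < 0` for `i ≠ j`
and `det r > 0`, then every mixture of the three real pure states is optimally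
entangled. -/
theorem rank_three_optimal_pos
    (ψ : Fin 3 → Fin 4 → ℝ) (hind : LinearIndependent ℝ ψ)
    (hunit : ∀ i, ∑ j, ψ i j ^ 2 = 1)
    (r : Matrix (Fin 3) (Fin 3) ℝ)
    (hr : ∀ i j, r i j = ψ i ⬝ᵥ (Jr *ᵥ ψ j))
    (hdiag : ∀ i, 0 < r i i)
    (hoff : ∀ i j, i ≠ j → r i i * r j j - r i j ^ 2 < 0)
    (hdet : 0 < r.det) :
    ∀ p : Fin 3 → ℝ, (∀ i, 0 < p i) → ∑ i, p i = 1 →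
      concurrence (∑ i, p i • pureState (ψ i)) = ∑ i, p i * r i i ∧
      ∑ i, p i * r i i = ∑ i, p i * concurrence (pureState (ψ i)) := by
  intro p hp hps
  have rsym : ∀ k l, r k l = r l k := by
    intro k l
    rw [hr, hr]
    simp only [dotProduct, Matrix.mulVec, Finset.mul_sum]
    rw [Finset.sum_comm]
    apply Finset.sum_congr rfl
    intro j _
    apply Finset.sum_congr rfl
    intro i _
    rw [Jr_symm i j]
    ring
  set M : Matrix (Fin 3) (Fin 3) ℝ :=
    Matrix.of fun k l => Real.sqrt (p k) * Real.sqrt (p l) * (ψ l ⬝ᵥ (Jr *ᵥ ψ k)) with hMdef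
  have hMr : ∀ k l, M k l = Real.sqrt (p k) * Real.sqrt (p l) * r k l := by
    intro k l
    rw [hMdef]
    simp only [Matrix.of_apply]
    rw [← hr l k, rsym l k]
  have hHerm : M.IsHermitian := by
    rw [Matrix.IsHermitian]
    ext k l
    rw [Matrix.conjTranspose_apply, star_trivial, hMr, hMr, rsym l k]
    ring
  obtain ⟨hcharM, htrM, htrM2, hdetM⟩ := hermitian_facts hHerm
  set lam := hHerm.eigenvalues with hlam
  set A : Matrix (Fin 4) (Fin 4) ℝ := ∑ k, p k • Matrix.vecMulVec (ψ k) (ψ k) with hA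
  have hcharN : (A * Jr).charpoly =
      X * ((X - Polynomial.C (lam 0)) * (X - Polynomial.C (lam 1)) *
        (X - Polynomial.C (lam 2))) := by
    rw [hA, mix_charpoly p hp ψ, ← hMdef, hcharM, Fin.prod_univ_three]
    ring
  -- trace fact
  have htr : lam 0 + lam 1 + lam 2 = p 0 * r 0 0 + p 1 * r 1 1 + p 2 * r 2 2 := by
    have h1 : M.trace = p 0 * r 0 0 + p 1 * r 1 1 + p 2 * r 2 2 := by
      rw [Matrix.trace, Fin.sum_univ_three]
      simp only [Matrix.diag_apply, hMr]
      rw [Real.mul_self_sqrt (hp 0).le, Real.mul_self_sqrt (hp 1).le,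
        Real.mul_self_sqrt (hp 2).le]
    rw [htrM, Fin.sum_univ_three] at h1
    linarith
  -- trace of square
  have hprodMM : ∀ k l, M k l * M l k = p k * p l * (r k l * r l k) := by
    intro k l
    rw [hMr, hMr, show Real.sqrt (p k) * Real.sqrt (p l) * r k l *
        (Real.sqrt (p l) * Real.sqrt (p k) * r l k) =
      (Real.sqrt (p k) * Real.sqrt (p k)) * ((Real.sqrt (p l) * Real.sqrt (p l)) *
        (r k l * r l k)) from by ring, Real.mul_self_sqrt (hp k).le,
      Real.mul_self_sqrt (hp l).le]
    ring
  have htr2 : lam 0 ^ 2 + lam 1 ^ 2 + lam 2 ^ 2 =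
      p 0 * p 0 * (r 0 0 * r 0 0) + p 1 * p 1 * (r 1 1 * r 1 1) + p 2 * p 2 * (r 2 2 * r 2 2)
      + 2 * (p 0 * p 1 * (r 0 1 * r 0 1)) + 2 * (p 0 * p 2 * (r 0 2 * r 0 2))
      + 2 * (p 1 * p 2 * (r 1 2 * r 1 2)) := by
    have h1 : (M * M).trace = p 0 * p 0 * (r 0 0 * r 0 0) + p 1 * p 1 * (r 1 1 * r 1 1)
        + p 2 * p 2 * (r 2 2 * r 2 2)
        + 2 * (p 0 * p 1 * (r 0 1 * r 0 1)) + 2 * (p 0 * p 2 * (r 0 2 * r 0 2))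
        + 2 * (p 1 * p 2 * (r 1 2 * r 1 2)) := by
      rw [Matrix.trace, Fin.sum_univ_three]
      simp only [Matrix.diag_apply, Matrix.mul_apply, Fin.sum_univ_three, hprodMM]
      rw [rsym 1 0, rsym 2 0, rsym 2 1]
      ring
    rw [htrM2, Fin.sum_univ_three] at h1
    linarith
  -- determinant
  have hdet3 : lam 0 * lam 1 * lam 2 = p 0 * p 1 * p 2 * r.det := by
    have hMfact : M = Matrix.diagonal (fun k => Real.sqrt (p k)) * r *
        Matrix.diagonal (fun k => Real.sqrt (p k)) := by
      ext k l
      rw [hMr, Matrix.mul_diagonal, Matrix.diagonal_mul]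
      ring
    have h1 : M.det = p 0 * p 1 * p 2 * r.det := by
      rw [hMfact, Matrix.det_mul, Matrix.det_mul, Matrix.det_diagonal, Fin.prod_univ_three]
      have s0 := Real.mul_self_sqrt (hp 0).le
      have s1 := Real.mul_self_sqrt (hp 1).le
      have s2 := Real.mul_self_sqrt (hp 2).le
      linear_combination (Real.sqrt (p 1) * Real.sqrt (p 1) * (Real.sqrt (p 2) * Real.sqrt (p 2)) * r.det) * s0 +
        (p 0 * (Real.sqrt (p 2) * Real.sqrt (p 2)) * r.det) * s1 + (p 0 * p 1 * r.det) * s2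
    rw [hdetM, Fin.prod_univ_three] at h1
    linarith
  -- the three inequalities
  have hin1 : 0 < lam 0 + lam 1 + lam 2 := by
    rw [htr]
    have := mul_pos (hp 0) (hdiag 0)
    have := mul_pos (hp 1) (hdiag 1)
    have := mul_pos (hp 2) (hdiag 2)
    linarith
  have hin3 : 0 < lam 0 * lam 1 * lam 2 := by
    rw [hdet3]
    have := mul_pos (mul_pos (mul_pos (hp 0) (hp 1)) (hp 2)) hdet
    linarith
  have hin2 : lam 0 * lam 1 + lam 0 * lam 2 + lam 1 * lam 2 < 0 := by
    have key : lam 0 * lam 1 + lam 0 * lam 2 + lam 1 * lam 2 =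
        p 0 * p 1 * (r 0 0 * r 1 1 - r 0 1 ^ 2) + p 0 * p 2 * (r 0 0 * r 2 2 - r 0 2 ^ 2)
        + p 1 * p 2 * (r 1 1 * r 2 2 - r 1 2 ^ 2) := by
      linear_combination ((lam 0 + lam 1 + lam 2) +
        (p 0 * r 0 0 + p 1 * r 1 1 + p 2 * r 2 2)) / 2 * htr - (1/2) * htr2
    have k01 := mul_neg_of_pos_of_neg (mul_pos (hp 0) (hp 1)) (hoff 0 1 (by decide))
    have k02 := mul_neg_of_pos_of_neg (mul_pos (hp 0) (hp 2)) (hoff 0 2 (by decide))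
    have k12 := mul_neg_of_pos_of_neg (mul_pos (hp 1) (hp 2)) (hoff 1 2 (by decide))
    rw [key]
    linarith
  obtain ⟨x, y, z, hx, hy, hz, hsum, hpoly⟩ := signs_lemma hin1 hin2 hin3
  have hρeq : (∑ i, p i • pureState (ψ i)) = A.map Complex.ofReal := by
    rw [hA]
    ext i j
    simp only [Matrix.sum_apply, Matrix.smul_apply, Matrix.map_apply, pureState,
      Matrix.vecMulVec_apply, Complex.real_smul, smul_eq_mul]
    push_cast
    rfl
  have hcharx : (A * Jr).charpoly =
      X * ((X - Polynomial.C x) * (X - Polynomial.C y) * (X - Polynomial.C z)) := by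
    rw [hcharN, hpoly]
  have hmain := concurrence_master A _ hρeq x y z hcharx hx hy hz (by rw [hsum]; exact hin1)
  constructor
  · rw [hmain, hsum, htr, Fin.sum_univ_three]
  · apply Finset.sum_congr rfl
    intro i _
    rw [pure_concurrence (ψ i) (r i i) (hr i i) (hdiag i)]
end

section
/- Let ψ₁, ψ₂, ψ₃ ∈ ℝ⁴ be linearly independent real unit vectors and let r be the 3×3 real symmetric matrix with entries r_{ij} = ψᵢᵀ J ψ_j. Suppose r_{ii} < 0 for i = 1,2,3, r_{ii}r_{jj} − r_{ij}² < 0 for all i ≠ j, and det(r) < 0. Then for every probability vector (p₁, p₂, p₃) with all pᵢ > 0, the mixture ρ = Σᵢ pᵢ ψᵢψᵢᵀ satisfies C(ρ) = Σᵢ pᵢ |r_{ii}| = Σᵢ pᵢ C(ψᵢψᵢᵀ). -/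
open Matrix Polynomial

variable {R : Type*} [CommRing R] {n : Type*} [Fintype n] [DecidableEq n]

lemma my_eval_charpoly (M : Matrix n n R) (x : R) :
    M.charpoly.eval x = (x • (1 : Matrix n n R) - M).det := by
  rw [Matrix.charpoly, ← Polynomial.coe_evalRingHom, RingHom.map_det]
  congr 1
  ext i j
  by_cases h : i = j
  · subst h; simp [charmatrix_apply_eq, Matrix.one_apply]
  · simp [charmatrix_apply_ne _ _ _ h, Matrix.one_apply_ne h]

lemma my_charpoly_conj (T T' M : Matrix n n R) (h : T * T' = 1) :
    (T * M * T').charpoly = M.charpoly := by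
  have key : charmatrix (T * M * T') =
      T.map C * charmatrix M * T'.map C := by
    have h1 : (T.map (C : R →+* R[X])) * (T'.map C) = 1 := by
      rw [← Matrix.map_mul, h]; simp
    calc charmatrix (T * M * T')
        = Matrix.scalar n X - (T * M * T').map C := rfl
      _ = T.map C * (Matrix.scalar n X - M.map C) * T'.map C := by
          rw [Matrix.mul_sub, Matrix.sub_mul]
          congr 1
          · rw [scalar_apply, ← Matrix.smul_one_eq_diagonal, Matrix.mul_smul, Matrix.smul_mul,
              mul_one, h1]
          · rw [Matrix.map_mul, Matrix.map_mul]
      _ = T.map C * charmatrix M * T'.map C := rfl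
  rw [Matrix.charpoly, key, det_mul, det_mul, Matrix.charpoly]
  have h1 : (T.map (C : R →+* R[X])).det * (T'.map C).det = 1 := by
    rw [← det_mul, ← Matrix.map_mul, h]; simp
  rw [mul_comm ((T.map (C : R →+* R[X])).det), mul_assoc, h1, mul_one]

lemma my_charpoly_diagonal (v : n → R) :
    (Matrix.diagonal v).charpoly = ∏ i, (X - C (v i)) := by
  have : charmatrix (Matrix.diagonal v) = Matrix.diagonal (fun i => X - C (v i)) := by
    ext i j
    by_cases h : i = j
    · subst h; simp
    · simp [charmatrix_apply_ne _ _ _ h, Matrix.diagonal_apply_ne _ h]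
  rw [Matrix.charpoly, this, det_diagonal]


section Rect

lemma my_eq_of_eval_nonneg {p q : ℝ[X]} (h : ∀ x : ℝ, 0 ≤ x → p.eval x = q.eval x) :
    p = q := by
  have h2 : p - q = 0 := by
    apply Polynomial.eq_zero_of_infinite_isRoot
    apply Set.Infinite.mono (s := Set.Ici (0:ℝ)) ?_ (Set.Ici_infinite 0)
    intro x hx
    simp only [Set.mem_setOf_eq, Polynomial.IsRoot, eval_sub, h x hx, sub_self]
  exact sub_eq_zero.mp h2

lemma my_charpoly_rect {m k : ℕ} (hm : 0 < m) (hk : 0 < k) (B : Matrix (Fin m) (Fin k) ℝ) (Cm : Matrix (Fin k) (Fin m) ℝ) :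
    (B * Cm).charpoly * X ^ k = (Cm * B).charpoly * X ^ m := by
  have key : ∀ x : ℝ, x ≠ 0 →
      (B * Cm).charpoly.eval x * x ^ k = (Cm * B).charpoly.eval x * x ^ m := by
    intro x hx
    rw [my_eval_charpoly, my_eval_charpoly]
    have e1 : x • (1 : Matrix (Fin m) (Fin m) ℝ) - B * Cm
        = x • ((1 : Matrix (Fin m) (Fin m) ℝ) - (x⁻¹ • B) * Cm) := by
      rw [smul_sub, Matrix.smul_mul, smul_smul, mul_inv_cancel₀ hx, one_smul]
    have e2 : x • (1 : Matrix (Fin k) (Fin k) ℝ) - Cm * B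
        = x • ((1 : Matrix (Fin k) (Fin k) ℝ) - Cm * (x⁻¹ • B)) := by
      rw [smul_sub, Matrix.mul_smul, smul_smul, mul_inv_cancel₀ hx, one_smul]
    rw [e1, e2, det_smul, det_smul, det_one_sub_mul_comm]
    simp only [Fintype.card_fin]; ring
  -- deduce polynomial identity
  have : ∀ x : ℝ, 0 ≤ x → ((B * Cm).charpoly * X ^ k).eval x
      = ((Cm * B).charpoly * X ^ m).eval x := by
    intro x hx
    rcases eq_or_lt_of_le hx with h0 | h0
    · simp [← h0, zero_pow hm.ne', zero_pow hk.ne']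
    · simpa using key x (ne_of_gt h0)
  exact my_eq_of_eval_nonneg this

end Rect

section Sq2

lemma my_charmatrix_eq (M : Matrix (Fin 4) (Fin 4) ℝ) :
    charmatrix M = (X : ℝ[X]) • (1 : Matrix (Fin 4) (Fin 4) ℝ[X]) - M.map C := by
  ext i j
  by_cases h : i = j
  · subst h; simp [Matrix.one_apply]
  · simp [charmatrix_apply_ne _ _ _ h, Matrix.one_apply_ne h]


lemma my_charpoly_sq (A : Matrix (Fin 4) (Fin 4) ℝ) (q : ℝ[X])
    (h : A.charpoly * A.charpoly.comp (-X) = q.comp (X ^ 2)) :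
    (A * A).charpoly = q := by
  set M : Matrix (Fin 4) (Fin 4) ℝ[X] := A.map C with hM
  have hprod : ((X : ℝ[X]) ^ 2) • (1 : Matrix (Fin 4) (Fin 4) ℝ[X]) - M * M
      = charmatrix A * ((X : ℝ[X]) • 1 + M) := by
    rw [my_charmatrix_eq, Matrix.sub_mul, Matrix.mul_add, Matrix.mul_add]
    simp only [Matrix.smul_mul, Matrix.mul_smul, smul_smul, ← pow_two, one_mul, mul_one]
    simp only [_root_.smul_pow, one_pow]
    rw [← hM, ← pow_two]
    abel
  -- comp with X^2
  have hφ : (A * A).charpoly.comp ((X : ℝ[X]) ^ 2)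
      = A.charpoly * A.charpoly.comp (-X) := by
    have e1 : (A * A).charpoly.comp ((X : ℝ[X]) ^ 2)
        = ((Polynomial.aeval ((X : ℝ[X]) ^ 2)).toRingHom :
            ℝ[X] →+* ℝ[X]) (charmatrix (A * A)).det := by
      rw [Matrix.charpoly, comp_eq_aeval]; rfl
    rw [e1, RingHom.map_det]
    have e2 : (charmatrix (A * A)).map ((Polynomial.aeval ((X : ℝ[X]) ^ 2)).toRingHom :
          ℝ[X] →+* ℝ[X]) = ((X : ℝ[X]) ^ 2) • (1 : Matrix (Fin 4) (Fin 4) ℝ[X]) - M * M := by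
      have hMM : M * M = (A * A).map C := by
        rw [hM, Matrix.map_mul]
      rw [hMM]
      ext i j
      by_cases hij : i = j
      · subst hij
        simp [Matrix.map_apply, Matrix.one_apply, ← comp_eq_aeval, ← Matrix.map_mul, hM]
      · simp [Matrix.map_apply, Matrix.one_apply_ne hij,
          charmatrix_apply_ne _ _ _ hij, ← comp_eq_aeval, ← Matrix.map_mul, hM]
    rw [RingHom.mapMatrix_apply]
    rw [e2, hprod, det_mul, ← Matrix.charpoly]
    congr 1
    -- det (X•1 + M) = charpoly A .comp (-X)
    have e3 : A.charpoly.comp (-X)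
        = ((Polynomial.aeval (-X : ℝ[X])).toRingHom :
            ℝ[X] →+* ℝ[X]) (charmatrix A).det := by
      rw [Matrix.charpoly, comp_eq_aeval]; rfl
    rw [e3, RingHom.map_det, RingHom.mapMatrix_apply]
    have e4 : (charmatrix A).map ((Polynomial.aeval (-X : ℝ[X])).toRingHom :
          ℝ[X] →+* ℝ[X]) = -((X : ℝ[X]) • 1 + M) := by
      ext i j
      by_cases hij : i = j
      · subst hij
        simp [Matrix.map_apply, Matrix.one_apply, ← comp_eq_aeval, hM]
        ring
      · simp [Matrix.map_apply, Matrix.one_apply_ne hij,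
          charmatrix_apply_ne _ _ _ hij, ← comp_eq_aeval, hM]
    rw [e4, Matrix.det_neg]
    norm_num
  rw [h] at hφ
  -- injectivity of comp (X^2)
  apply my_eq_of_eval_nonneg
  intro x hx
  have := congrArg (Polynomial.eval (Real.sqrt x)) hφ
  simpa [Polynomial.eval_comp, Real.sq_sqrt hx] using this

end Sq2

section Herm




lemma my_charpoly_hermitian {S : Matrix n n ℝ} (hS : S.IsHermitian) :
    S.charpoly = ∏ i, (X - C (hS.eigenvalues i)) := by
  have hU : (hS.eigenvectorUnitary : Matrix n n ℝ) * star (hS.eigenvectorUnitary : Matrix n n ℝ)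
      = 1 := (Matrix.mem_unitaryGroup_iff).mp (hS.eigenvectorUnitary).2
  calc S.charpoly
      = ((hS.eigenvectorUnitary : Matrix n n ℝ) * diagonal (RCLike.ofReal ∘ hS.eigenvalues)
          * star (hS.eigenvectorUnitary : Matrix n n ℝ)).charpoly := by
        conv_lhs => rw [hS.spectral_theorem, Unitary.conjStarAlgAut_apply]
    _ = (diagonal (RCLike.ofReal ∘ hS.eigenvalues)).charpoly := my_charpoly_conj _ _ _ hU
    _ = ∏ i, (X - C (hS.eigenvalues i)) := by
        rw [my_charpoly_diagonal]
        simp [RCLike.ofReal_real_eq_id]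

lemma my_trace_eigenvalues {S : Matrix n n ℝ} (hS : S.IsHermitian) :
    ∑ i, hS.eigenvalues i = S.trace := by
  have hU : star (hS.eigenvectorUnitary : Matrix n n ℝ) * (hS.eigenvectorUnitary : Matrix n n ℝ)
      = 1 := (Matrix.mem_unitaryGroup_iff').mp (hS.eigenvectorUnitary).2
  conv_rhs => rw [hS.spectral_theorem, Unitary.conjStarAlgAut_apply]
  rw [Matrix.trace_mul_cycle, hU, Matrix.one_mul, Matrix.trace_diagonal]
  simp [RCLike.ofReal_real_eq_id]

end Herm

section Eig


lemma my_eig (r : Matrix (Fin 3) (Fin 3) ℝ) (p : Fin 3 → ℝ) (hp : ∀ i, 0 < p i)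
    (hrsym : r.IsHermitian)
    (hdiag : ∀ i, r i i < 0) (hoff : r 0 0 * r 1 1 - r 0 1 ^ 2 < 0) (hdet : r.det < 0) :
    ∃ x y z : ℝ, 0 < x ∧ 0 < y ∧ z < 0 ∧ x + y + z = ∑ i, p i * r i i ∧
      (Matrix.diagonal p * r).charpoly = (X - C x) * (X - C y) * (X - C z) := by
  set d : Fin 3 → ℝ := fun i => Real.sqrt (p i) with hd
  have hd0 : ∀ i, 0 < d i := fun i => Real.sqrt_pos.mpr (hp i)
  have hdd : ∀ i, d i * d i = p i := fun i => Real.mul_self_sqrt (hp i).le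
  set S : Matrix (Fin 3) (Fin 3) ℝ := Matrix.diagonal d * r * Matrix.diagonal d with hSdef
  have hDD' : Matrix.diagonal d * Matrix.diagonal (fun i => (d i)⁻¹) = 1 := by
    rw [Matrix.diagonal_mul_diagonal]
    convert Matrix.diagonal_one
    exact mul_inv_cancel₀ (hd0 _).ne'
  have hD'D : Matrix.diagonal (fun i => (d i)⁻¹) * Matrix.diagonal d = 1 := by
    rw [Matrix.diagonal_mul_diagonal]
    convert Matrix.diagonal_one
    exact inv_mul_cancel₀ (hd0 _).ne'
  -- conjugation
  have hconj : Matrix.diagonal p * r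
      = Matrix.diagonal d * S * Matrix.diagonal (fun i => (d i)⁻¹) := by
    rw [hSdef]
    rw [Matrix.mul_assoc, Matrix.mul_assoc, hDD', Matrix.mul_one, ← Matrix.mul_assoc,
      Matrix.diagonal_mul_diagonal]
    rw [show (fun i => d i * d i) = p from funext hdd]
  have hchS : (Matrix.diagonal p * r).charpoly = S.charpoly := by
    rw [hconj]
    exact my_charpoly_conj _ _ _ hDD'
  -- S is symmetric
  have hS : S.IsHermitian := by
    have : Sᴴ = S := by
      rw [hSdef, Matrix.conjTranspose_mul, Matrix.conjTranspose_mul]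
      rw [Matrix.diagonal_conjTranspose, hrsym.eq]
      have : star d = d := by funext i; simp
      rw [this, Matrix.mul_assoc]
    exact this
  set e := hS.eigenvalues with he
  -- determinant
  have hdetS : S.det < 0 := by
    rw [hSdef, Matrix.det_mul, Matrix.det_mul, Matrix.det_diagonal]
    have h1 : 0 < ∏ i, d i := Finset.prod_pos fun i _ => hd0 i
    have := mul_neg_of_pos_of_neg (mul_pos h1 h1) hdet
    nlinarith [this]
  have hprod : e 0 * e 1 * e 2 = S.det := by
    have := hS.det_eq_prod_eigenvalues
    rw [Fin.prod_univ_three] at this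
    rw [this]
    norm_num
    rfl
  have htr : e 0 + e 1 + e 2 = ∑ i, p i * r i i := by
    have h1 := my_trace_eigenvalues hS
    rw [Fin.sum_univ_three] at h1
    rw [h1, Matrix.trace]
    apply Finset.sum_congr rfl
    intro i _
    rw [Matrix.diag_apply, hSdef, Matrix.mul_diagonal, Matrix.diagonal_mul, ← hdd i]
    ring
  -- not all eigenvalues negative
  have hnotall : ¬ (∀ i, e i < 0) := by
    intro hall
    have hpsdS : (-S).PosSemidef := by
      have hspec := hS.spectral_theorem
      have : -S = (hS.eigenvectorUnitary : Matrix (Fin 3) (Fin 3) ℝ)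
          * Matrix.diagonal (fun i => -(e i))
          * (hS.eigenvectorUnitary : Matrix (Fin 3) (Fin 3) ℝ)ᴴ := by
        rw [← Matrix.star_eq_conjTranspose]
        conv_lhs => rw [hspec, Unitary.conjStarAlgAut_apply]
        rw [RCLike.ofReal_real_eq_id, Function.id_comp]
        rw [show Matrix.diagonal (fun i => -(e i)) = -Matrix.diagonal e by
          rw [Matrix.diagonal_neg]]
        noncomm_ring
      rw [this]
      exact (Matrix.PosSemidef.diagonal (fun i => neg_nonneg.mpr (hall i).le)).mul_mul_conjTranspose_same _
    have hpsdr : (-r).PosSemidef := by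
      have : -r = Matrix.diagonal (fun i => (d i)⁻¹) * (-S)
          * (Matrix.diagonal (fun i => (d i)⁻¹))ᴴ := by
        rw [Matrix.diagonal_conjTranspose]
        have hstar : star (fun i => (d i)⁻¹) = fun i => (d i)⁻¹ := by funext i; simp
        rw [hstar, hSdef]
        rw [Matrix.mul_neg, Matrix.neg_mul]
        congr 1
        rw [← Matrix.mul_assoc, ← Matrix.mul_assoc, hD'D, Matrix.one_mul, Matrix.mul_assoc, hDD',
          Matrix.mul_one]
      rw [this]
      exact hpsdS.mul_mul_conjTranspose_same _
    have key := hpsdr.re_dotProduct_nonneg ![-(r 0 1), r 0 0, 0]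
    have hr10 : r 1 0 = r 0 1 := by
      have := congrFun (congrFun hrsym.eq 0) 1
      simpa [Matrix.conjTranspose_apply] using this
    simp only [RCLike.re_to_real, Pi.star_apply, star_trivial, dotProduct, mulVec,
      Fin.sum_univ_three, Matrix.neg_apply, Matrix.cons_val_zero, Matrix.cons_val_one,
      Matrix.head_cons, Matrix.cons_val_two, Matrix.tail_cons, star_trivial] at key
    rw [hr10] at key
    nlinarith [key, hdiag 0, hoff]
  -- eigenvalues nonzero
  have hne0 : e 0 ≠ 0 := by
    intro h; rw [h] at hprod; simp at hprod; linarith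
  have hne1 : e 1 ≠ 0 := by
    intro h; rw [h] at hprod; simp at hprod; linarith
  have hne2 : e 2 ≠ 0 := by
    intro h; rw [h] at hprod; simp at hprod; linarith
  -- case analysis
  rcases hne0.lt_or_gt with h0 | h0 <;>
    rcases hne1.lt_or_gt with h1 | h1 <;>
      rcases hne2.lt_or_gt with h2 | h2
  · refine absurd (fun i => ?_) hnotall
    fin_cases i <;> assumption
  · exfalso; nlinarith [mul_pos (mul_pos_of_neg_of_neg h0 h1) h2]
  · exfalso; nlinarith [mul_pos_of_neg_of_neg h0 h2, h1]
  · refine ⟨e 1, e 2, e 0, h1, h2, h0, by linarith, ?_⟩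
    rw [hchS, my_charpoly_hermitian hS, Fin.prod_univ_three]
    ring
  · exfalso; nlinarith [mul_pos_of_neg_of_neg h1 h2, h0]
  · refine ⟨e 0, e 2, e 1, h0, h2, h1, by linarith, ?_⟩
    rw [hchS, my_charpoly_hermitian hS, Fin.prod_univ_three]
    ring
  · refine ⟨e 0, e 1, e 2, h0, h1, h2, by linarith, ?_⟩
    rw [hchS, my_charpoly_hermitian hS, Fin.prod_univ_three]
  · exfalso; nlinarith [mul_pos (mul_pos h0 h1) h2]

end Eig

section Asm


lemma my_J_symm : Jrᵀ = Jr := by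
  ext i j
  fin_cases i <;> fin_cases j <;> simp [Jr, Matrix.vecHead, Matrix.vecTail]

lemma my_dot_symm (u v : Fin 4 → ℝ) : u ⬝ᵥ (Jr *ᵥ v) = v ⬝ᵥ (Jr *ᵥ u) := by
  rw [Matrix.dotProduct_mulVec]
  conv_lhs => rw [← my_J_symm, Matrix.vecMul_transpose]
  exact dotProduct_comm _ _

lemma my_mixed_charpoly (ψ : Fin 3 → Fin 4 → ℝ) (p : Fin 3 → ℝ)
    (r : Matrix (Fin 3) (Fin 3) ℝ) (hr : ∀ i j, r i j = ψ i ⬝ᵥ (Jr *ᵥ ψ j)) :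
    ((∑ i, p i • Matrix.vecMulVec (ψ i) (ψ i)) * Jr).charpoly
      = X * (Matrix.diagonal p * r).charpoly := by
  set Ψ : Matrix (Fin 3) (Fin 4) ℝ := Matrix.of ψ with hΨ
  have hρ : (∑ i, p i • Matrix.vecMulVec (ψ i) (ψ i)) = Ψᵀ * (Matrix.diagonal p * Ψ) := by
    ext a b
    simp only [Matrix.sum_apply, Matrix.smul_apply, Matrix.vecMulVec_apply, smul_eq_mul,
      Matrix.mul_apply, Matrix.diagonal_apply, Matrix.transpose_apply]
    apply Finset.sum_congr rfl
    intro j _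
    rw [Finset.sum_eq_single j (fun k _ hk => by simp [Ne.symm hk]) (by simp)]
    simp [hΨ]
    ring
  have hΨJΨ : Ψ * Jr * Ψᵀ = r := by
    ext i j
    rw [hr]
    simp only [Matrix.mul_apply, Matrix.transpose_apply, dotProduct, Matrix.mulVec,
      Finset.sum_mul, dotProduct]
    rw [Finset.sum_comm]
    apply Finset.sum_congr rfl
    intro a _
    rw [Finset.mul_sum]
    apply Finset.sum_congr rfl
    intro b _
    simp [hΨ]
    ring
  have hCB : (Matrix.diagonal p * Ψ * Jr) * Ψᵀ = Matrix.diagonal p * r := by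
    rw [Matrix.mul_assoc, Matrix.mul_assoc, ← Matrix.mul_assoc Ψ, hΨJΨ]
  have hrect := my_charpoly_rect (by norm_num) (by norm_num) Ψᵀ (Matrix.diagonal p * Ψ * Jr)
  rw [hCB] at hrect
  have heq : Ψᵀ * (Matrix.diagonal p * Ψ * Jr) = (∑ i, p i • Matrix.vecMulVec (ψ i) (ψ i)) * Jr := by
    rw [hρ]; simp only [Matrix.mul_assoc]
  rw [heq] at hrect
  have : ((∑ i, p i • Matrix.vecMulVec (ψ i) (ψ i)) * Jr).charpoly * X ^ 3
      = (X * (Matrix.diagonal p * r).charpoly) * X ^ 3 := by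
    rw [hrect]; ring
  exact mul_right_cancel₀ (pow_ne_zero 3 Polynomial.X_ne_zero) this

lemma my_pure_charpoly (ψi : Fin 4 → ℝ) (c : ℝ) (hc : c = ψi ⬝ᵥ (Jr *ᵥ ψi)) :
    (Matrix.vecMulVec ψi ψi * Jr).charpoly = (X - C c) * X ^ 3 := by
  have hvv : Matrix.vecMulVec ψi ψi = Matrix.replicateCol (Fin 1) ψi * Matrix.replicateRow (Fin 1) ψi :=
    Matrix.vecMulVec_eq (Fin 1) ψi ψi
  have hrect := my_charpoly_rect (m := 4) (k := 1) (by norm_num) (by norm_num)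
    (Matrix.replicateCol (Fin 1) ψi) (Matrix.replicateRow (Fin 1) ψi * Jr)
  have hBC : Matrix.replicateCol (Fin 1) ψi * (Matrix.replicateRow (Fin 1) ψi * Jr)
      = Matrix.vecMulVec ψi ψi * Jr := by
    rw [hvv, Matrix.mul_assoc]
  have hCB : (Matrix.replicateRow (Fin 1) ψi * Jr) * Matrix.replicateCol (Fin 1) ψi
      = Matrix.of (fun (_ _ : Fin 1) => c) := by
    ext i j
    fin_cases i; fin_cases j
    rw [hc]
    simp only [Matrix.mul_apply, Matrix.replicateRow_apply, Matrix.replicateCol_apply, dotProduct,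
      Matrix.mulVec, dotProduct, Finset.sum_mul, Matrix.of_apply]
    rw [Finset.sum_comm]
    apply Finset.sum_congr rfl
    intro a _
    rw [Finset.mul_sum]
    apply Finset.sum_congr rfl
    intro b _
    ring
  have hch1 : (Matrix.of (fun (_ _ : Fin 1) => c) : Matrix (Fin 1) (Fin 1) ℝ).charpoly
      = X - C c := by
    rw [Matrix.charpoly, Matrix.det_fin_one]
    simp
  rw [hBC, hCB, hch1] at hrect
  have : (Matrix.vecMulVec ψi ψi * Jr).charpoly * X ^ 1
      = ((X - C c) * X ^ 3) * X ^ 1 := by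
    rw [hrect]; ring
  exact mul_right_cancel₀ (pow_ne_zero 1 Polynomial.X_ne_zero) this

end Asm


lemma my_Jc_eq : Jc = Jr.map (Complex.ofRealHom : ℝ →+* ℂ) := by
  ext i j
  fin_cases i <;> fin_cases j <;> simp [Jc, Jr, Matrix.vecHead, Matrix.vecTail]

lemma my_concurrence_eq (ρr : Matrix (Fin 4) (Fin 4) ℝ) (a b c : ℝ)
    (h0 : 0 ≤ a) (hab : a ≤ b) (hbc : b ≤ c)
    (hch : ((ρr * Jr) * (ρr * Jr)).charpoly
      = X * ((X - C a) * (X - C b) * (X - C c))) :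
    concurrence (ρr.map Complex.ofReal) =
      max 0 (Real.sqrt c - Real.sqrt b - Real.sqrt a) := by
  have hmapeq : ρr.map (Complex.ofReal : ℝ → ℂ) = ρr.map (Complex.ofRealHom : ℝ →+* ℂ) := rfl
  -- the product matrix
  have hconj : (ρr.map (Complex.ofRealHom : ℝ →+* ℂ)).map (starRingEnd ℂ)
      = ρr.map (Complex.ofRealHom : ℝ →+* ℂ) := by
    ext i j; simp [Matrix.map_apply]
  have hprod : ρr.map (Complex.ofRealHom : ℝ →+* ℂ)
        * spinFlip (ρr.map (Complex.ofRealHom : ℝ →+* ℂ))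
      = (((ρr * Jr) * (ρr * Jr))).map (Complex.ofRealHom : ℝ →+* ℂ) := by
    rw [spinFlip, hconj, my_Jc_eq, ← Matrix.map_mul, ← Matrix.map_mul, ← Matrix.map_mul]
    congr 1
    noncomm_ring
  have hchc : (ρr.map (Complex.ofRealHom : ℝ →+* ℂ)
        * spinFlip (ρr.map (Complex.ofRealHom : ℝ →+* ℂ))).charpoly
      = X * ((X - C (a:ℂ)) * (X - C (b:ℂ)) * (X - C (c:ℂ))) := by
    rw [hprod, Matrix.charpoly_map, hch]
    simp [Polynomial.map_mul, Polynomial.map_sub]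
  have hroots : (ρr.map (Complex.ofRealHom : ℝ →+* ℂ)
        * spinFlip (ρr.map (Complex.ofRealHom : ℝ →+* ℂ))).charpoly.roots
      = {0, (a:ℂ), (b:ℂ), (c:ℂ)} := by
    rw [hchc]
    rw [Polynomial.roots_mul (by
      apply mul_ne_zero X_ne_zero
      exact mul_ne_zero (mul_ne_zero (X_sub_C_ne_zero _) (X_sub_C_ne_zero _))
        (X_sub_C_ne_zero _)),
      Polynomial.roots_mul (mul_ne_zero (mul_ne_zero (X_sub_C_ne_zero _) (X_sub_C_ne_zero _))
        (X_sub_C_ne_zero _)),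
      Polynomial.roots_mul (mul_ne_zero (X_sub_C_ne_zero _) (X_sub_C_ne_zero _)),
      Polynomial.roots_X, Polynomial.roots_X_sub_C, Polynomial.roots_X_sub_C,
      Polynomial.roots_X_sub_C]
    rfl
  have hre : ((ρr.map (Complex.ofRealHom : ℝ →+* ℂ)
        * spinFlip (ρr.map (Complex.ofRealHom : ℝ →+* ℂ))).charpoly.roots.map Complex.re)
      = ↑[(0:ℝ), a, b, c] := by
    rw [hroots]
    rfl
  have hsort : (((ρr.map (Complex.ofRealHom : ℝ →+* ℂ)
        * spinFlip (ρr.map (Complex.ofRealHom : ℝ →+* ℂ))).charpoly.roots.map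
          Complex.re).sort (· ≤ ·)) = [0, a, b, c] := by
    rw [hre]
    apply List.Perm.eq_of_pairwise' (Multiset.pairwise_sort _ _) ?_
      (Multiset.coe_eq_coe.mp (Multiset.sort_eq _ _))
    simp [List.pairwise_cons]
    refine ⟨⟨h0, le_trans h0 hab, le_trans h0 (le_trans hab hbc)⟩, ⟨hab, le_trans hab hbc⟩, hbc⟩
  rw [hmapeq, concurrence, hsort]
  simp [List.getD]


/-- Optimality for triples, Case 2: if `rᵢᵢ < 0`, `rᵢᵢrⱼⱼ − rᵢⱼ² < 0` for `i ≠ j`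
and `det r < 0`, then every mixture of the three real pure states is optimally
entangled. -/
theorem rank_three_optimal_neg
    (ψ : Fin 3 → Fin 4 → ℝ) (hind : LinearIndependent ℝ ψ)
    (hunit : ∀ i, ∑ j, ψ i j ^ 2 = 1)
    (r : Matrix (Fin 3) (Fin 3) ℝ)
    (hr : ∀ i j, r i j = ψ i ⬝ᵥ (Jr *ᵥ ψ j))
    (hdiag : ∀ i, r i i < 0)
    (hoff : ∀ i j, i ≠ j → r i i * r j j - r i j ^ 2 < 0)
    (hdet : r.det < 0) :
    ∀ p : Fin 3 → ℝ, (∀ i, 0 < p i) → ∑ i, p i = 1 →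
      concurrence (∑ i, p i • pureState (ψ i)) = ∑ i, p i * |r i i| ∧
      ∑ i, p i * |r i i| = ∑ i, p i * concurrence (pureState (ψ i)) := by
  intro p hp hsum
  have hrsym : r.IsHermitian := by
    rw [Matrix.IsHermitian]
    ext i j
    rw [Matrix.conjTranspose_apply, star_trivial, hr, hr, my_dot_symm]
  -- pure states
  have hpure : ∀ i, concurrence (pureState (ψ i)) = |r i i| := by
    intro i
    have hchA := my_pure_charpoly (ψ i) (r i i) (hr i i)
    have hAA2 : ((Matrix.vecMulVec (ψ i) (ψ i) * Jr) * (Matrix.vecMulVec (ψ i) (ψ i) * Jr)).charpoly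
        = X * ((X - C 0) * (X - C 0) * (X - C ((r i i) ^ 2))) := by
      apply my_charpoly_sq
      rw [hchA]
      simp only [Polynomial.mul_comp, Polynomial.sub_comp, Polynomial.X_comp,
        Polynomial.C_comp, Polynomial.pow_comp, map_pow, map_zero, Polynomial.zero_comp]
      ring
    have hc := my_concurrence_eq (Matrix.vecMulVec (ψ i) (ψ i)) 0 0 ((r i i) ^ 2)
      le_rfl le_rfl (sq_nonneg _) hAA2
    rw [pureState, hc, Real.sqrt_zero, Real.sqrt_sq_eq_abs]
    simp [abs_nonneg]
  refine ⟨?_, ?_⟩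
  · -- mixture
    obtain ⟨x, y, z, hx, hy, hz, hxyz, hchp⟩ :=
      my_eig r p hp hrsym hdiag (hoff 0 1 (by decide)) hdet
    have hA : ((∑ i, p i • Matrix.vecMulVec (ψ i) (ψ i)) * Jr).charpoly
        = X * ((X - C x) * (X - C y) * (X - C z)) := by
      rw [my_mixed_charpoly ψ p r hr, hchp]
    have hAA : (((∑ i, p i • Matrix.vecMulVec (ψ i) (ψ i)) * Jr)
          * ((∑ i, p i • Matrix.vecMulVec (ψ i) (ψ i)) * Jr)).charpoly
        = X * ((X - C (x ^ 2)) * (X - C (y ^ 2)) * (X - C (z ^ 2))) := by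
      apply my_charpoly_sq
      rw [hA]
      simp only [Polynomial.mul_comp, Polynomial.sub_comp, Polynomial.X_comp,
        Polynomial.C_comp, Polynomial.pow_comp, map_pow, map_zero, Polynomial.zero_comp]
      ring
    have hmap : (∑ i, p i • pureState (ψ i))
        = (∑ i, p i • Matrix.vecMulVec (ψ i) (ψ i)).map Complex.ofReal := by
      ext a b
      simp only [Matrix.sum_apply, Matrix.smul_apply, Matrix.map_apply, pureState,
        Matrix.vecMulVec_apply, smul_eq_mul, Complex.real_smul]
      push_cast
      rfl
    have hsneg : ∑ i, p i * r i i < 0 := by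
      rw [Fin.sum_univ_three]
      have h0 := mul_neg_of_pos_of_neg (hp 0) (hdiag 0)
      have h1 := mul_neg_of_pos_of_neg (hp 1) (hdiag 1)
      have h2 := mul_neg_of_pos_of_neg (hp 2) (hdiag 2)
      linarith
    have habs : ∑ i, p i * |r i i| = -(x + y + z) := by
      rw [hxyz, ← Finset.sum_neg_distrib]
      apply Finset.sum_congr rfl
      intro i _
      rw [abs_of_neg (hdiag i)]
      ring
    rw [hmap, habs]
    rcases le_total x y with hxy | hxy
    · have hc := my_concurrence_eq _ (x ^ 2) (y ^ 2) (z ^ 2)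
        (by positivity) (by nlinarith) (by nlinarith) hAA
      rw [hc, Real.sqrt_sq hx.le, Real.sqrt_sq hy.le, Real.sqrt_sq_eq_abs,
        abs_of_neg hz]
      rw [max_eq_right (by nlinarith)]
      ring
    · have hAA' : (((∑ i, p i • Matrix.vecMulVec (ψ i) (ψ i)) * Jr)
            * ((∑ i, p i • Matrix.vecMulVec (ψ i) (ψ i)) * Jr)).charpoly
          = X * ((X - C (y ^ 2)) * (X - C (x ^ 2)) * (X - C (z ^ 2))) := by
        rw [hAA]; ring
      have hc := my_concurrence_eq _ (y ^ 2) (x ^ 2) (z ^ 2)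
        (by positivity) (by nlinarith) (by nlinarith) hAA'
      rw [hc, Real.sqrt_sq hx.le, Real.sqrt_sq hy.le, Real.sqrt_sq_eq_abs,
        abs_of_neg hz]
      rw [max_eq_right (by nlinarith)]
      ring
  · apply Finset.sum_congr rfl
    intro i _
    rw [hpure i]
end

section
/- Let σ × σ denote the product of the uniform probability measures on S³ × S³, and set r₁₁(x) = 2(x₂x₃ − x₁x₄), r₂₂(y) = 2(y₂y₃ − y₁y₄), r₁₂(x,y) = x₂y₃ + x₃y₂ − x₁y₄ − x₄y₁. Then the measure of the optimal set { (x,y) : r₁₁(x)r₂₂(y) > 0 and r₁₂(x,y)² − r₁₁(x)r₂₂(y) > 0 } equals the measure of { (x,y) : r₁₂(x,y)² − r₁₁(x)r₂₂(y) > 0 } minus 1/2. -/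
open MeasureTheory Matrix Real Set
open scoped ENNReal

/-! ### Countability of zero sets of trigonometric polynomials -/

lemma countable_cosEq (c : ℝ) : {x : ℝ | Real.cos x = c}.Countable := by
  rcases le_or_gt |c| 1 with h | h
  · have h1 : -1 ≤ c := neg_le_of_abs_le h
    have h2 : c ≤ 1 := le_of_abs_le h
    have hsub : {x : ℝ | Real.cos x = c} ⊆
        ⋃ k : ℤ, ({Real.arccos c - 2*k*Real.pi, 2*k*Real.pi - Real.arccos c} : Set ℝ) := by
      intro x hx
      have hx' : Real.cos x = Real.cos (Real.arccos c) := by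
        rw [Real.cos_arccos h1 h2]; exact hx
      rw [Real.cos_eq_cos_iff] at hx'
      obtain ⟨k, hk | hk⟩ := hx'
      · refine Set.mem_iUnion.2 ⟨k, ?_⟩
        simp only [Set.mem_insert_iff, Set.mem_singleton_iff]
        left; linarith
      · refine Set.mem_iUnion.2 ⟨k, ?_⟩
        simp only [Set.mem_insert_iff, Set.mem_singleton_iff]
        right; linarith
    exact Set.Countable.mono hsub
      (Set.countable_iUnion fun k => (Set.countable_singleton _).insert _)
  · have he : {x : ℝ | Real.cos x = c} = ∅ := by
      ext x; simp only [Set.mem_setOf_eq, Set.mem_empty_iff_false, iff_false]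
      intro hx
      have := Real.abs_cos_le_one x
      rw [hx] at this; linarith
    rw [he]; exact Set.countable_empty

lemma countable_lincos (A B C : ℝ) (h : ¬(A = 0 ∧ B = 0)) :
    {u : ℝ | A * Real.cos u + B * Real.sin u + C = 0}.Countable := by
  have hz : (⟨A, B⟩ : ℂ) ≠ 0 := by
    simp only [ne_eq, Complex.ext_iff, Complex.zero_re, Complex.zero_im]
    exact h
  set R := ‖(⟨A, B⟩ : ℂ)‖ with hR
  have hR0 : 0 < R := norm_pos_iff.mpr hz
  have hcos : Real.cos (Complex.arg ⟨A, B⟩) = A / R := Complex.cos_arg hz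
  have hsin : Real.sin (Complex.arg ⟨A, B⟩) = B / R := Complex.sin_arg _
  set φ := Complex.arg (⟨A, B⟩ : ℂ)
  have hsub : {u : ℝ | A * Real.cos u + B * Real.sin u + C = 0} ⊆
      (fun u => u - φ) ⁻¹' {v | Real.cos v = -C / R} := by
    intro u hu
    simp only [Set.mem_setOf_eq] at hu
    simp only [Set.mem_preimage, Set.mem_setOf_eq]
    rw [Real.cos_sub, hcos, hsin]
    field_simp
    linarith
  exact Set.Countable.mono hsub
    ((countable_cosEq _).preimage (sub_left_injective))

lemma countable_lincos2 (A B C : ℝ) (h : ¬(A = 0 ∧ B = 0)) :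
    {θ : ℝ | A * Real.cos (2*θ) + B * Real.sin (2*θ) + C = 0}.Countable := by
  have he : {θ : ℝ | A * Real.cos (2*θ) + B * Real.sin (2*θ) + C = 0} =
      (fun θ : ℝ => 2*θ) ⁻¹' {u : ℝ | A * Real.cos u + B * Real.sin u + C = 0} := rfl
  rw [he]
  exact (countable_lincos A B C h).preimage (mul_right_injective₀ two_ne_zero)

/-! ### A Fubini slicing lemma -/

lemma key_slice {α : Type*} [MeasurableSpace α] (ν : Measure α) [IsProbabilityMeasure ν]
    (g : ℝ → α → ℝ) (hg : Measurable (Function.uncurry g))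
    (z : ℝ≥0∞) (h1 : ∀ θ : ℝ, ν {x | g θ x = 0} = z)
    (K : Set α) (hK : MeasurableSet K)
    (h2 : ∀ x ∈ K, ∀ θ, g θ x = 0)
    (h3 : ∀ x ∉ K, {θ | g θ x = 0}.Countable) :
    ν K = z := by
  set μ : Measure ℝ := volume.restrict (Set.Ioc (0:ℝ) 1) with hμ
  have hμuniv : μ Set.univ = 1 := by
    rw [hμ, Measure.restrict_apply MeasurableSet.univ, Set.univ_inter, Real.volume_Ioc]
    norm_num
  set E : Set (ℝ × α) := {p | g p.1 p.2 = 0} with hE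
  have hEm : MeasurableSet E := hg (measurableSet_singleton 0)
  have c1 : (μ.prod ν) E = z := by
    rw [Measure.prod_apply hEm]
    have h' : ∀ θ : ℝ, ν (Prod.mk θ ⁻¹' E) = z := fun θ => h1 θ
    simp_rw [h']
    rw [lintegral_const, hμuniv, mul_one]
  have c2 : (μ.prod ν) E = ν K := by
    rw [Measure.prod_apply_symm hEm]
    have hfun : ∀ x : α, μ ((fun θ => (θ, x)) ⁻¹' E) = K.indicator (fun _ => 1) x := by
      intro x
      by_cases hx : x ∈ K
      · have hu : ((fun θ => (θ, x)) ⁻¹' E) = Set.univ := by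
          ext θ; simp [hE, h2 x hx θ]
        rw [hu, hμuniv, Set.indicator_of_mem hx]
      · have hsub : ((fun θ => (θ, x)) ⁻¹' E) ⊆ {θ | g θ x = 0} := fun θ hθ => hθ
        rw [Set.indicator_of_notMem hx]
        exact measure_mono_null hsub ((h3 x hx).measure_zero μ)
    simp_rw [hfun]
    rw [lintegral_indicator hK]
    simp
  rw [← c2, c1]

/-! ### Rotation matrices -/

noncomputable def rotS (θ : ℝ) : Matrix (Fin 4) (Fin 4) ℝ :=
  !![1,0,0,0; 0, Real.cos θ, -Real.sin θ, 0; 0, Real.sin θ, Real.cos θ, 0; 0,0,0,1]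

noncomputable def rotT (θ : ℝ) : Matrix (Fin 4) (Fin 4) ℝ :=
  !![Real.cos θ,0,0,-Real.sin θ; 0,1,0,0; 0,0,1,0; Real.sin θ,0,0,Real.cos θ]

def swapM : Matrix (Fin 4) (Fin 4) ℝ := !![0,1,0,0; 1,0,0,0; 0,0,0,1; 0,0,1,0]

lemma rotS_orth (θ : ℝ) : rotS θ * (rotS θ)ᵀ = 1 := by
  have h := Real.sin_sq_add_cos_sq θ
  ext i j
  fin_cases i <;> fin_cases j <;>
    simp [rotS, Matrix.mul_apply, Matrix.transpose, Fin.sum_univ_four, Matrix.one_apply,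
      Matrix.vecHead, Matrix.vecTail] <;> nlinarith

lemma rotT_orth (θ : ℝ) : rotT θ * (rotT θ)ᵀ = 1 := by
  have h := Real.sin_sq_add_cos_sq θ
  ext i j
  fin_cases i <;> fin_cases j <;>
    simp [rotT, Matrix.mul_apply, Matrix.transpose, Fin.sum_univ_four, Matrix.one_apply,
      Matrix.vecHead, Matrix.vecTail] <;> nlinarith

lemma swapM_orth : swapM * swapMᵀ = 1 := by
  ext i j
  fin_cases i <;> fin_cases j <;>
    simp [swapM, Matrix.mul_apply, Matrix.transpose, Fin.sum_univ_four, Matrix.one_apply,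
      Matrix.vecHead, Matrix.vecTail]

/-- The off-diagonal entry function. -/
def ff (x : Fin 4 → ℝ) : ℝ := 2 * (x 1 * x 2 - x 0 * x 3)

lemma ff_meas : Measurable ff := by unfold ff; fun_prop

lemma ff_rotS (θ : ℝ) (x : Fin 4 → ℝ) :
    ff (rotS θ *ᵥ x) =
      (2*(x 1 * x 2)) * Real.cos (2*θ) + (x 1^2 - x 2^2) * Real.sin (2*θ)
        + (-(2*(x 0 * x 3))) := by
  simp [ff, rotS, Matrix.mulVec, dotProduct, Fin.sum_univ_four, Matrix.vecHead, Matrix.vecTail,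
    Real.cos_two_mul', Real.sin_two_mul]
  ring

lemma ff_rotT (θ : ℝ) (x : Fin 4 → ℝ) :
    ff (rotT θ *ᵥ x) =
      (-(2*(x 0 * x 3))) * Real.cos (2*θ) + (-(x 0^2 - x 3^2)) * Real.sin (2*θ)
        + (2*(x 1 * x 2)) := by
  simp [ff, rotT, Matrix.mulVec, dotProduct, Fin.sum_univ_four, Matrix.vecHead, Matrix.vecTail,
    Real.cos_two_mul', Real.sin_two_mul]
  ring

lemma ff_swapM (x : Fin 4 → ℝ) : ff (swapM *ᵥ x) = - ff x := by
  simp [ff, swapM, Matrix.mulVec, dotProduct, Fin.sum_univ_four, Matrix.vecHead, Matrix.vecTail]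
  ring

lemma mulVec_meas (R : Matrix (Fin 4) (Fin 4) ℝ) :
    Measurable fun y : Fin 4 → ℝ => R *ᵥ y := by
  have he : (fun y : Fin 4 → ℝ => R *ᵥ y) = ⇑R.mulVecLin := by
    ext y i; simp [Matrix.mulVecLin_apply]
  rw [he]
  exact R.mulVecLin.continuous_of_finiteDimensional.measurable

/-! ### The zero-measure lemma -/

lemma aux_zero (a b : ℝ) (h1 : a * b = 0) (h2 : a ^ 2 - b ^ 2 = 0) : a = 0 ∧ b = 0 := by
  rcases mul_eq_zero.1 h1 with h | h
  · refine ⟨h, ?_⟩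
    have hb : b ^ 2 = 0 := by rw [h] at h2; nlinarith
    exact pow_eq_zero_iff two_ne_zero |>.mp hb
  · refine ⟨?_, h⟩
    have ha : a ^ 2 = 0 := by rw [h] at h2; nlinarith
    exact pow_eq_zero_iff two_ne_zero |>.mp ha



lemma sigma_ff_zero (σ : Measure (Fin 4 → ℝ)) [IsProbabilityMeasure σ]
    (hsupp : σ {y : Fin 4 → ℝ | ∑ i, y i ^ 2 = 1} = 1)
    (hinv : ∀ R : Matrix (Fin 4) (Fin 4) ℝ, R * Rᵀ = 1 →
      Measure.map (fun y => R *ᵥ y) σ = σ) :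
    σ {x | ff x = 0} = 0 := by
  have hfset : MeasurableSet {x : Fin 4 → ℝ | ff x = 0} :=
    ff_meas (measurableSet_singleton 0)
  have hmap : ∀ R : Matrix (Fin 4) (Fin 4) ℝ, R * Rᵀ = 1 →
      ∀ s : Set (Fin 4 → ℝ), MeasurableSet s →
      σ ((fun y => R *ᵥ y) ⁻¹' s) = σ s := by
    intro R hR s hs
    conv_rhs => rw [← hinv R hR]
    rw [Measure.map_apply (mulVec_meas R) hs]
  set z := σ {x | ff x = 0} with hz
  -- family S
  set gS : ℝ → (Fin 4 → ℝ) → ℝ := fun θ x =>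
    (2*(x 1 * x 2)) * Real.cos (2*θ) + (x 1^2 - x 2^2) * Real.sin (2*θ)
      + (-(2*(x 0 * x 3))) with hgS
  set K₂ : Set (Fin 4 → ℝ) := {x | x 1 = 0 ∧ x 2 = 0 ∧ x 0 * x 3 = 0} with hK₂
  have hK₂m : MeasurableSet K₂ := by
    apply MeasurableSet.inter
    · exact (measurable_pi_apply 1) (measurableSet_singleton 0)
    apply MeasurableSet.inter
    · exact (measurable_pi_apply 2) (measurableSet_singleton 0)
    · exact ((measurable_pi_apply 0).mul (measurable_pi_apply 3)) (measurableSet_singleton 0)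
  have e2 : σ K₂ = z := by
    apply key_slice σ gS
    · unfold gS; fun_prop
    · intro θ
      have hset : {x | gS θ x = 0} = (fun y => rotS θ *ᵥ y) ⁻¹' {x | ff x = 0} := by
        ext x
        simp only [Set.mem_setOf_eq, Set.mem_preimage, ff_rotS, hgS]
      rw [hset, hmap (rotS θ) (rotS_orth θ) _ hfset]
    · exact hK₂m
    · intro x hx θ
      obtain ⟨a, b, c⟩ := hx
      simp [hgS, a, b, c]
    · intro x hx
      by_cases hA : 2*(x 1 * x 2) = 0 ∧ x 1^2 - x 2^2 = 0
      · obtain ⟨hx1, hx2⟩ := aux_zero (x 1) (x 2) (by linarith [hA.1]) hA.2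
        have hC : x 0 * x 3 ≠ 0 := fun h => hx ⟨hx1, hx2, h⟩
        have he : {θ | gS θ x = 0} = ∅ := by
          ext θ
          simp only [Set.mem_setOf_eq, Set.mem_empty_iff_false, iff_false, hgS]
          intro h
          apply hC
          rw [hx1, hx2] at h
          nlinarith [h]
        rw [he]; exact Set.countable_empty
      · exact countable_lincos2 _ _ _ hA
  -- family T
  set gT : ℝ → (Fin 4 → ℝ) → ℝ := fun θ x =>
    (-(2*(x 0 * x 3))) * Real.cos (2*θ) + (-(x 0^2 - x 3^2)) * Real.sin (2*θ)
      + (2*(x 1 * x 2)) with hgT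
  set K₃ : Set (Fin 4 → ℝ) := {x | x 0 = 0 ∧ x 3 = 0 ∧ x 1 * x 2 = 0} with hK₃
  have hK₃m : MeasurableSet K₃ := by
    apply MeasurableSet.inter
    · exact (measurable_pi_apply 0) (measurableSet_singleton 0)
    apply MeasurableSet.inter
    · exact (measurable_pi_apply 3) (measurableSet_singleton 0)
    · exact ((measurable_pi_apply 1).mul (measurable_pi_apply 2)) (measurableSet_singleton 0)
  have e3 : σ K₃ = z := by
    apply key_slice σ gT
    · unfold gT; fun_prop
    · intro θ
      have hset : {x | gT θ x = 0} = (fun y => rotT θ *ᵥ y) ⁻¹' {x | ff x = 0} := by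
        ext x
        simp only [Set.mem_setOf_eq, Set.mem_preimage, ff_rotT, hgT]
      rw [hset, hmap (rotT θ) (rotT_orth θ) _ hfset]
    · exact hK₃m
    · intro x hx θ
      obtain ⟨a, b, c⟩ := hx
      simp [hgT, a, b, c]
    · intro x hx
      by_cases hA : -(2*(x 0 * x 3)) = 0 ∧ -(x 0^2 - x 3^2) = 0
      · obtain ⟨hx0, hx3⟩ := aux_zero (x 0) (x 3) (by linarith [hA.1]) (by linarith [hA.2])
        have hC : x 1 * x 2 ≠ 0 := fun h => hx ⟨hx0, hx3, h⟩
        have he : {θ | gT θ x = 0} = ∅ := by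
          ext θ
          simp only [Set.mem_setOf_eq, Set.mem_empty_iff_false, iff_false, hgT]
          intro h
          apply hC
          rw [hx0, hx3] at h
          nlinarith [h]
        rw [he]; exact Set.countable_empty
      · exact countable_lincos2 _ _ _ hA
  -- combine
  have hK₂f : K₂ ⊆ {x | ff x = 0} := by
    rintro x ⟨a, b, c⟩
    simp only [Set.mem_setOf_eq, ff, a, c]
    ring
  have hK₃f : K₃ ⊆ {x | ff x = 0} := by
    rintro x ⟨a, b, c⟩
    simp only [Set.mem_setOf_eq, ff, a, c]
    ring
  have hSm : MeasurableSet {y : Fin 4 → ℝ | ∑ i, y i ^ 2 = 1} := by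
    have : Measurable fun y : Fin 4 → ℝ => ∑ i, y i ^ 2 := by fun_prop
    exact this (measurableSet_singleton 1)
  have hcompl : σ ({y : Fin 4 → ℝ | ∑ i, y i ^ 2 = 1}ᶜ) = 0 := by
    rw [measure_compl hSm (measure_ne_top σ _), hsupp, measure_univ]
    simp
  have hinter : σ (K₂ ∩ K₃) = 0 := by
    refine measure_mono_null ?_ hcompl
    rintro x ⟨⟨a1, a2, _⟩, ⟨a0, a3, _⟩⟩
    simp only [Set.mem_compl_iff, Set.mem_setOf_eq, Fin.sum_univ_four, a0, a1, a2, a3]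
    norm_num
  have hunion : σ (K₂ ∪ K₃) ≤ z := by
    rw [hz]
    exact measure_mono (Set.union_subset hK₂f hK₃f)
  have hadd : σ (K₂ ∪ K₃) + σ (K₂ ∩ K₃) = σ K₂ + σ K₃ := measure_union_add_inter K₂ hK₃m
  rw [hinter, add_zero, e2, e3] at hadd
  have h2z : z + z ≤ z := hadd ▸ hunion
  by_contra hz0
  exact absurd h2z (not_le.2 (ENNReal.lt_add_right (measure_ne_top σ _) hz0))

/-- The polarized entry. -/
def gg (x y : Fin 4 → ℝ) : ℝ := x 1 * y 2 + x 2 * y 1 - x 0 * y 3 - x 3 * y 0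

/-- The fraction of optimal pairs: with `r₁₁(x) = 2(x₂x₃ − x₁x₄)`,
`r₂₂(y) = 2(y₂y₃ − y₁y₄)` and `r₁₂(x,y) = x₂y₃ + x₃y₂ − x₁y₄ − x₄y₁`, the
`σ × σ`-measure of `{r₁₁ r₂₂ > 0 and r₁₂² − r₁₁ r₂₂ > 0}` equals the measure of
`{r₁₂² − r₁₁ r₂₂ > 0}` minus `1/2`. -/
theorem measure_optimal_set_eq
    (σ : Measure (Fin 4 → ℝ)) [IsProbabilityMeasure σ]
    (hsupp : σ {y : Fin 4 → ℝ | ∑ i, y i ^ 2 = 1} = 1)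
    (hinv : ∀ R : Matrix (Fin 4) (Fin 4) ℝ, R * Rᵀ = 1 →
      Measure.map (fun y => R *ᵥ y) σ = σ)
    (r₁₁ r₂₂ : (Fin 4 → ℝ) → ℝ) (r₁₂ : (Fin 4 → ℝ) → (Fin 4 → ℝ) → ℝ)
    (hr₁₁ : ∀ x, r₁₁ x = 2 * (x 1 * x 2 - x 0 * x 3))
    (hr₂₂ : ∀ y, r₂₂ y = 2 * (y 1 * y 2 - y 0 * y 3))
    (hr₁₂ : ∀ x y, r₁₂ x y = x 1 * y 2 + x 2 * y 1 - x 0 * y 3 - x 3 * y 0) :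
    ((σ.prod σ) {q : (Fin 4 → ℝ) × (Fin 4 → ℝ) |
        0 < r₁₁ q.1 * r₂₂ q.2 ∧
        0 < r₁₂ q.1 q.2 ^ 2 - r₁₁ q.1 * r₂₂ q.2}).toReal =
      ((σ.prod σ) {q : (Fin 4 → ℝ) × (Fin 4 → ℝ) |
        0 < r₁₂ q.1 q.2 ^ 2 - r₁₁ q.1 * r₂₂ q.2}).toReal - 1 / 2 := by
  have hr₁₁' : r₁₁ = ff := funext fun x => by rw [hr₁₁ x]; rfl
  have hr₂₂' : r₂₂ = ff := funext fun x => by rw [hr₂₂ x]; rfl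
  have hr₁₂' : r₁₂ = gg := funext fun x => funext fun y => by rw [hr₁₂ x y]; rfl
  subst hr₁₁' hr₂₂' hr₁₂'
  set μ := σ.prod σ with hμ
  haveI : IsProbabilityMeasure μ := by rw [hμ]; infer_instance
  have hz : σ {x | ff x = 0} = 0 := sigma_ff_zero σ hsupp hinv
  have hfset : MeasurableSet {x : Fin 4 → ℝ | ff x = 0} :=
    ff_meas (measurableSet_singleton 0)
  -- measurable pieces
  have h1m : Measurable fun q : (Fin 4 → ℝ) × (Fin 4 → ℝ) => ff q.1 * ff q.2 := by
    unfold ff; fun_prop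
  have h2m : Measurable fun q : (Fin 4 → ℝ) × (Fin 4 → ℝ) =>
      gg q.1 q.2 ^ 2 - ff q.1 * ff q.2 := by
    unfold ff gg; fun_prop
  set A : Set ((Fin 4 → ℝ) × (Fin 4 → ℝ)) :=
    {q | 0 < ff q.1 * ff q.2 ∧ 0 < gg q.1 q.2 ^ 2 - ff q.1 * ff q.2} with hA
  set N : Set ((Fin 4 → ℝ) × (Fin 4 → ℝ)) := {q | ff q.1 * ff q.2 < 0} with hN
  set Z : Set ((Fin 4 → ℝ) × (Fin 4 → ℝ)) :=
    {q | ff q.1 * ff q.2 = 0 ∧ 0 < gg q.1 q.2 ^ 2 - ff q.1 * ff q.2} with hZ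
  set B : Set ((Fin 4 → ℝ) × (Fin 4 → ℝ)) :=
    {q | 0 < gg q.1 q.2 ^ 2 - ff q.1 * ff q.2} with hB
  have hAm : MeasurableSet A :=
    (measurableSet_lt measurable_const h1m).inter (measurableSet_lt measurable_const h2m)
  have hNm : MeasurableSet N := measurableSet_lt h1m measurable_const
  have hZm : MeasurableSet Z :=
    (h1m (measurableSet_singleton 0)).inter (measurableSet_lt measurable_const h2m)
  -- B = (A ∪ N) ∪ Z
  have hBsplit : B = (A ∪ N) ∪ Z := by
    ext q
    simp only [hA, hB, hN, hZ, Set.mem_union, Set.mem_setOf_eq]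
    constructor
    · intro hq
      rcases lt_trichotomy (ff q.1 * ff q.2) 0 with h | h | h
      · exact Or.inl (Or.inr h)
      · exact Or.inr ⟨h, hq⟩
      · exact Or.inl (Or.inl ⟨h, hq⟩)
    · rintro ((⟨_, h⟩ | h) | ⟨_, h⟩)
      · exact h
      · nlinarith [sq_nonneg (gg q.1 q.2)]
      · exact h
  have hd1 : Disjoint A N := by
    rw [Set.disjoint_left]
    rintro q ⟨h, _⟩ hq
    exact absurd hq (not_lt.2 h.le)
  have hd2 : Disjoint (A ∪ N) Z := by
    rw [Set.disjoint_left]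
    rintro q (⟨h, _⟩ | h) ⟨hq, _⟩
    · exact absurd hq (ne_of_gt h)
    · exact absurd hq (ne_of_lt h)
  -- μ Z = 0
  have hZ0 : μ Z = 0 := by
    have hs1 : μ ({x : Fin 4 → ℝ | ff x = 0} ×ˢ (Set.univ : Set (Fin 4 → ℝ))) = 0 := by
      rw [hμ, Measure.prod_prod, hz, zero_mul]
    have hs2 : μ ((Set.univ : Set (Fin 4 → ℝ)) ×ˢ {x : Fin 4 → ℝ | ff x = 0}) = 0 := by
      rw [hμ, Measure.prod_prod, hz, mul_zero]
    refine measure_mono_null (fun q hq => ?_) (measure_union_null hs1 hs2)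
    rcases mul_eq_zero.1 hq.1 with h | h
    · exact Or.inl ⟨h, Set.mem_univ _⟩
    · exact Or.inr ⟨Set.mem_univ _, h⟩
  -- symmetry : σ {ff < 0} = σ {0 < ff}
  have hsym : σ {x | ff x < 0} = σ {x | 0 < ff x} := by
    have hpm : MeasurableSet {x : Fin 4 → ℝ | 0 < ff x} :=
      measurableSet_lt measurable_const ff_meas
    have h1 : σ ((fun y => swapM *ᵥ y) ⁻¹' {x | 0 < ff x}) = σ {x | 0 < ff x} := by
      conv_rhs => rw [← hinv swapM swapM_orth]
      rw [Measure.map_apply (mulVec_meas swapM) hpm]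
    have h2 : ((fun y => swapM *ᵥ y) ⁻¹' {x | 0 < ff x}) = {x | ff x < 0} := by
      ext x
      simp only [Set.mem_preimage, Set.mem_setOf_eq, ff_swapM]
      constructor <;> intro h <;> linarith
    rw [← h2, h1]
  -- σ {0 < ff} + σ {ff < 0} = 1
  have hsum : σ {x | 0 < ff x} + σ {x | ff x < 0} = 1 := by
    have hun : {x : Fin 4 → ℝ | 0 < ff x} ∪ {x | ff x < 0} = {x | ff x = 0}ᶜ := by
      ext x
      simp only [Set.mem_union, Set.mem_setOf_eq, Set.mem_compl_iff]
      constructor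
      · rintro (h | h) <;> intro h' <;> rw [h'] at h <;> exact lt_irrefl 0 h
      · intro h
        rcases lt_trichotomy (ff x) 0 with h' | h' | h'
        · exact Or.inr h'
        · exact absurd h' h
        · exact Or.inl h'
    have hd : Disjoint {x : Fin 4 → ℝ | 0 < ff x} {x | ff x < 0} := by
      rw [Set.disjoint_left]
      intro x hx hx'
      simp only [Set.mem_setOf_eq] at hx hx'
      linarith
    rw [← measure_union hd (measurableSet_lt ff_meas measurable_const), hun,
      measure_compl hfset (measure_ne_top σ _), hz, measure_univ]
    simp
  -- μ N = p * n + n * p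
  have hNval : μ N = σ {x | 0 < ff x} * σ {x | ff x < 0}
      + σ {x | ff x < 0} * σ {x | 0 < ff x} := by
    have hNun : N = ({x : Fin 4 → ℝ | 0 < ff x} ×ˢ {x | ff x < 0})
        ∪ ({x : Fin 4 → ℝ | ff x < 0} ×ˢ {x | 0 < ff x}) := by
      ext q
      simp only [hN, Set.mem_setOf_eq, Set.mem_union, Set.mem_prod]
      exact mul_neg_iff.trans (by tauto)
    have hd : Disjoint ({x : Fin 4 → ℝ | 0 < ff x} ×ˢ {x | ff x < 0})
        ({x : Fin 4 → ℝ | ff x < 0} ×ˢ {x | 0 < ff x}) := by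
      rw [Set.disjoint_left]
      rintro q ⟨h1, _⟩ ⟨h2, _⟩
      simp only [Set.mem_setOf_eq] at h1 h2
      linarith
    rw [hNun, measure_union hd
      ((measurableSet_lt ff_meas measurable_const).prod
        (measurableSet_lt measurable_const ff_meas)),
      hμ, Measure.prod_prod, Measure.prod_prod]
  -- to the reals
  set p := σ {x | 0 < ff x} with hp
  set n := σ {x | ff x < 0} with hn
  have hpt : p ≠ ⊤ := measure_ne_top σ _
  have hnt : n ≠ ⊤ := measure_ne_top σ _
  have hsum' : p.toReal + n.toReal = 1 := by
    rw [← ENNReal.toReal_add hpt hnt, hsum]; simp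
  have hsym' : p.toReal = n.toReal := by rw [hsym]
  have hNval' : (μ N).toReal = 1 / 2 := by
    rw [hNval, ENNReal.toReal_add (ENNReal.mul_ne_top hpt hnt) (ENNReal.mul_ne_top hnt hpt),
      ENNReal.toReal_mul, ENNReal.toReal_mul]
    nlinarith [hsum', hsym']
  -- final assembly
  have hBval : μ B = μ A + μ N := by
    rw [hBsplit, measure_union hd2 hZm, measure_union hd1 hNm, hZ0, add_zero]
  have hAt : μ A ≠ ⊤ := measure_ne_top μ _
  have hNt : μ N ≠ ⊤ := measure_ne_top μ _
  have : (μ B).toReal = (μ A).toReal + (μ N).toReal := by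
    rw [hBval, ENNReal.toReal_add hAt hNt]
  rw [this, hNval']
  ring
end
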